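/- arXiv:math/0305435 — 8 statements merged into one kernel-verified Lean document; each statement's English description precedes it below -/
import Mathlib

section
/- Let L be a lattice (finite-index subgroup) of Z^2 with index [Z^2 : L] ≤ N^2. Then the number of points (x,y) in L with |x| ≤ N, |y| ≤ N and gcd(x,y) = 1 is at most C·N^2/[Z^2 : L] for an absolute constant C. -/
lemma index_dvd_det (L : AddSubgroup (ℤ × ℤ)) (hL : L.index ≠ 0) {p q : ℤ × ℤ}
    (hp : p ∈ L) (hq : q ∈ L) : (L.index : ℤ) ∣ (p.1 * q.2 - p.2 * q.1) := by
  set M : Submodule ℤ (ℤ × ℤ) := AddSubgroup.toIntSubmodule L with hM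
  obtain ⟨n, snf⟩ := M.smithNormalForm (Module.Basis.finTwoProd ℤ)
  have hAdd : M.toAddSubgroup = L := AddSubgroup.toIntSubmodule_toAddSubgroup L
  have hn : n = 2 := by
    have := snf.toAddSubgroup_index_ne_zero_iff.mp (by rwa [hAdd])
    simpa using this
  subst hn
  have hidx : (L.index : ℤ) = ((snf.a 0 * snf.a 1).natAbs : ℤ) := by
    have h := snf.toAddSubgroup_index_eq_pow_mul_prod
    rw [hAdd] at h
    rw [h]
    simp [Fin.prod_univ_two, Int.index_zmultiples, Int.natAbs_mul]
  have hmem : ∀ r : ℤ × ℤ, r ∈ L → ∃ c0 c1 : ℤ,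
      r = (c0 * snf.a 0) • (snf.bM (snf.f 0)) + (c1 * snf.a 1) • (snf.bM (snf.f 1)) := by
    intro r hr
    have hrM : r ∈ M := by
      rw [hM]
      show r ∈ (AddSubgroup.toIntSubmodule L : Set (ℤ × ℤ))
      rw [AddSubgroup.coe_toIntSubmodule]
      exact hr
    refine ⟨snf.bN.repr ⟨r, hrM⟩ 0, snf.bN.repr ⟨r, hrM⟩ 1, ?_⟩
    have h := snf.bN.sum_repr ⟨r, hrM⟩
    rw [Fin.sum_univ_two] at h
    have h2 := congrArg (Subtype.val : M → ℤ × ℤ) h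
    simp only [Submodule.coe_add, Submodule.coe_smul, snf.snf] at h2
    simp only [smul_smul] at h2
    exact h2.symm
  obtain ⟨c0, c1, hpc⟩ := hmem p hp
  obtain ⟨d0, d1, hqc⟩ := hmem q hq
  rw [hidx]
  rw [Int.natAbs_dvd]
  set u := snf.bM (snf.f 0)
  set v := snf.bM (snf.f 1)
  refine ⟨(c0 * d1 - c1 * d0) * (u.1 * v.2 - u.2 * v.1), ?_⟩
  have hp1 : p.1 = c0 * snf.a 0 * u.1 + c1 * snf.a 1 * v.1 := by
    rw [hpc]; simp
  have hp2 : p.2 = c0 * snf.a 0 * u.2 + c1 * snf.a 1 * v.2 := by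
    rw [hpc]; simp
  have hq1 : q.1 = d0 * snf.a 0 * u.1 + d1 * snf.a 1 * v.1 := by
    rw [hqc]; simp
  have hq2 : q.2 = d0 * snf.a 0 * u.2 + d1 * snf.a 1 * v.2 := by
    rw [hqc]; simp
  rw [hp1, hp2, hq1, hq2]; ring


lemma primitive_parallel {p q : ℤ × ℤ} (hp : Int.gcd p.1 p.2 = 1) (hq : Int.gcd q.1 q.2 = 1)
    (h : p.1 * q.2 - p.2 * q.1 = 0) : q = p ∨ q = -p := by
  obtain ⟨a, b, hab⟩ := Int.isCoprime_iff_gcd_eq_one.mpr hp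
  set t := a * q.1 + b * q.2 with ht
  have h1 : q.1 = t * p.1 := by rw [ht]; linear_combination (-b) * h - q.1 * hab
  have h2 : q.2 = t * p.2 := by rw [ht]; linear_combination a * h - q.2 * hab
  have htabs : t.natAbs = 1 := by
    have : Int.gcd q.1 q.2 = t.natAbs * Int.gcd p.1 p.2 := by
      rw [h1, h2]; exact Int.gcd_mul_left t p.1 p.2
    rw [hq, hp, mul_one] at this
    omega
  rcases Int.natAbs_eq_iff.mp htabs with h' | h'
  · left; rw [h'] at h1 h2; ext
    · simpa using h1
    · simpa using h2
  · right; rw [h'] at h1 h2; ext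
    · simpa using h1
    · simpa using h2

lemma floor_close {a1 b1 a2 b2 : ℤ} (hb1 : 0 < b1) (hb2 : 0 < b2)
    (h : a1 / b1 = a2 / b2) : |a1 * b2 - a2 * b1| < b1 * b2 := by
  have e1 : b1 * (a1 / b1) + a1 % b1 = a1 := Int.mul_ediv_add_emod a1 b1
  have e2 : b2 * (a2 / b2) + a2 % b2 = a2 := Int.mul_ediv_add_emod a2 b2
  rw [h] at e1
  have r1nn : 0 ≤ a1 % b1 := Int.emod_nonneg a1 hb1.ne'
  have r2nn : 0 ≤ a2 % b2 := Int.emod_nonneg a2 hb2.ne'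
  have r1lt : a1 % b1 < b1 := Int.emod_lt_of_pos a1 hb1
  have r2lt : a2 % b2 < b2 := Int.emod_lt_of_pos a2 hb2
  have hdiff : a1 * b2 - a2 * b1 = (a1 % b1) * b2 - (a2 % b2) * b1 := by
    linear_combination b1 * e2 - b2 * e1
  rw [abs_lt, hdiff]
  constructor
  · nlinarith [mul_lt_mul_of_pos_right r2lt hb1, mul_nonneg r1nn hb2.le]
  · nlinarith [mul_lt_mul_of_pos_right r1lt hb2, mul_nonneg r2nn hb1.le]

lemma sector_count (N d : ℕ) (hd : 0 < d) (hN : 0 < N) (S : Set (ℤ × ℤ))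
    (hdvd : ∀ p ∈ S, ∀ q ∈ S, (d : ℤ) ∣ (p.1 * q.2 - p.2 * q.1))
    (hprim : ∀ p ∈ S, Int.gcd p.1 p.2 = 1)
    (hreg : ∀ p ∈ S, 0 < p.2 ∧ p.1.natAbs ≤ p.2.natAbs ∧ p.2.natAbs ≤ N) :
    S.ncard ≤ 2 * (2 * N ^ 2 / d) + 2 := by
  classical
  have hd' : (0 : ℤ) < d := by exact_mod_cast hd
  have hN' : (0 : ℤ) < (N : ℤ) ^ 2 := by positivity
  -- injectivity
  have hinj : Set.InjOn (fun p : ℤ × ℤ => (2 * (N : ℤ) ^ 2 * p.1) / ((d : ℤ) * p.2)) S := by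
    intro p hp q hq hk
    by_contra hne
    obtain ⟨hp2, hp12, hp2N⟩ := hreg p hp
    obtain ⟨hq2, hq12, hq2N⟩ := hreg q hq
    obtain ⟨D, hD⟩ : ∃ D : ℤ, D = p.1 * q.2 - p.2 * q.1 := ⟨_, rfl⟩
    have hDne : D ≠ 0 := by
      rw [hD]
      intro h0
      rcases primitive_parallel (hprim p hp) (hprim q hq) h0 with h' | h'
      · exact hne h'.symm
      · rw [h'] at hq2; simp at hq2; omega
    have hDdvd : (d : ℤ) ∣ D := hD ▸ hdvd p hp q hq
    have hDabs : (d : ℤ) ≤ |D| := Int.le_of_dvd (abs_pos.mpr hDne) ((dvd_abs _ _).mpr hDdvd)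
    have hclose := floor_close (mul_pos hd' hp2) (mul_pos hd' hq2) hk
    have hcomp : 2 * (N : ℤ) ^ 2 * p.1 * ((d : ℤ) * q.2) - 2 * (N : ℤ) ^ 2 * q.1 * ((d : ℤ) * p.2)
        = (2 * (N : ℤ) ^ 2 * (d : ℤ)) * D := by rw [hD]; ring
    rw [hcomp, abs_mul, abs_of_nonneg (by positivity : (0:ℤ) ≤ 2 * (N : ℤ) ^ 2 * (d : ℤ))] at hclose
    have hy1 : p.2 ≤ (N : ℤ) := by omega
    have hy2 : q.2 ≤ (N : ℤ) := by omega
    have hbb : (d : ℤ) * p.2 * ((d : ℤ) * q.2) ≤ (d : ℤ) ^ 2 * (N : ℤ) ^ 2 := by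
      have hpq : p.2 * q.2 ≤ (N : ℤ) ^ 2 := by nlinarith
      calc (d : ℤ) * p.2 * ((d : ℤ) * q.2) = (d : ℤ) ^ 2 * (p.2 * q.2) := by ring
        _ ≤ _ := mul_le_mul_of_nonneg_left hpq (by positivity)
    have hchain : 2 * (N : ℤ) ^ 2 * (d : ℤ) * (d : ℤ) ≤ 2 * (N : ℤ) ^ 2 * (d : ℤ) * |D| :=
      mul_le_mul_of_nonneg_left hDabs (by positivity)
    nlinarith
  -- range
  have hrange : (fun p : ℤ × ℤ => (2 * (N : ℤ) ^ 2 * p.1) / ((d : ℤ) * p.2)) '' S ⊆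
      Set.Icc (-(2 * (N : ℤ) ^ 2 / (d : ℤ)) - 1) (2 * (N : ℤ) ^ 2 / (d : ℤ)) := by
    rintro - ⟨p, hp, rfl⟩
    obtain ⟨hp2, hp12, hp2N⟩ := hreg p hp
    have hb : (0 : ℤ) < (d : ℤ) * p.2 := mul_pos hd' hp2
    have hNN : (0 : ℤ) ≤ 2 * (N : ℤ) ^ 2 := by positivity
    constructor
    · show -(2 * (N : ℤ) ^ 2 / (d : ℤ)) - 1 ≤ (2 * (N : ℤ) ^ 2 * p.1) / ((d : ℤ) * p.2)
      rw [Int.le_ediv_iff_mul_le hb]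
      have hle : -(2 * (N : ℤ) ^ 2 * p.2) ≤ 2 * (N : ℤ) ^ 2 * p.1 := by
        have := mul_le_mul_of_nonneg_left (show -(p.2) ≤ p.1 by omega) hNN
        linarith
      have hKd : 2 * (N : ℤ) ^ 2 < (2 * (N : ℤ) ^ 2 / (d : ℤ) + 1) * d :=
        Int.lt_ediv_add_one_mul_self (2 * (N : ℤ) ^ 2) hd'
      have := mul_le_mul_of_nonneg_right hKd.le hp2.le
      nlinarith
    · show (2 * (N : ℤ) ^ 2 * p.1) / ((d : ℤ) * p.2) ≤ 2 * (N : ℤ) ^ 2 / (d : ℤ)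
      have hle : 2 * (N : ℤ) ^ 2 * p.1 ≤ 2 * (N : ℤ) ^ 2 * p.2 :=
        mul_le_mul_of_nonneg_left (show p.1 ≤ p.2 by omega) hNN
      calc (2 * (N : ℤ) ^ 2 * p.1) / ((d : ℤ) * p.2)
          ≤ (2 * (N : ℤ) ^ 2 * p.2) / ((d : ℤ) * p.2) := Int.ediv_le_ediv hb hle
        _ = (p.2 * (2 * (N : ℤ) ^ 2)) / (p.2 * (d : ℤ)) := by
            rw [mul_comm ((d:ℤ)) p.2, mul_comm (2 * (N : ℤ) ^ 2) p.2]
        _ = (2 * (N : ℤ) ^ 2) / (d : ℤ) := Int.mul_ediv_mul_of_pos _ _ hp2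
  -- conclude
  obtain ⟨K, hK⟩ : ∃ K : ℤ, K = 2 * (N : ℤ) ^ 2 / (d : ℤ) := ⟨_, rfl⟩
  rw [← hK] at hrange
  have hfinIcc : (Set.Icc (-K - 1) K).Finite := Set.finite_Icc _ _
  have h1 : S.ncard = ((fun p : ℤ × ℤ => (2 * (N : ℤ) ^ 2 * p.1) / ((d : ℤ) * p.2)) '' S).ncard :=
    (Set.ncard_image_of_injOn hinj).symm
  have h2 := Set.ncard_le_ncard hrange hfinIcc
  have h3 : (Set.Icc (-K - 1) K).ncard = (K - (-K - 1) + 1).toNat := by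
    rw [Set.ncard_eq_toFinset_card', Set.toFinset_Icc, Int.card_Icc]; omega
  have hKnat : K = ((2 * N ^ 2 / d : ℕ) : ℤ) := by
    rw [hK]; push_cast [Int.natCast_ediv]; norm_num
  omega


/-- Let `L` be a lattice (finite-index subgroup) of `ℤ²` with index `[ℤ² : L] ≤ N²`.
Then the number of points `(x,y) ∈ L` with `|x| ≤ N`, `|y| ≤ N` and `gcd(x,y) = 1`
is at most `C · N² / [ℤ² : L]` for an absolute constant `C`. -/
theorem stmt_0 :
    ∃ C : ℝ, 0 < C ∧
      ∀ (N : ℕ) (L : AddSubgroup (ℤ × ℤ)), L.FiniteIndex → L.index ≤ N ^ 2 →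
        (Set.ncard {p : ℤ × ℤ | p ∈ L ∧ p.1.natAbs ≤ N ∧ p.2.natAbs ≤ N ∧
            Int.gcd p.1 p.2 = 1} : ℝ) ≤ C * (N : ℝ) ^ 2 / (L.index : ℝ) := by
  refine ⟨100, by norm_num, ?_⟩
  intro N L hLfin hLidx
  have hd0 : L.index ≠ 0 := hLfin.index_ne_zero
  set d := L.index with hdd
  have hd : 0 < d := Nat.pos_of_ne_zero hd0
  have hN : 0 < N := by
    rcases Nat.eq_zero_or_pos N with h | h
    · subst h; simp at hLidx; omega
    · exact h
  set S := {p : ℤ × ℤ | p ∈ L ∧ p.1.natAbs ≤ N ∧ p.2.natAbs ≤ N ∧ Int.gcd p.1 p.2 = 1}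
    with hS
  -- finiteness of S
  have hSsub : S ⊆ Set.Icc (-(N : ℤ)) N ×ˢ Set.Icc (-(N : ℤ)) N := by
    rintro p ⟨-, h1, h2, -⟩
    constructor <;> constructor <;> omega
  have hSfin : S.Finite :=
    Set.Finite.subset (Set.Finite.prod (Set.finite_Icc _ _) (Set.finite_Icc _ _)) hSsub
  -- the four regions
  set S1 := {p ∈ S | 0 < p.2 ∧ p.1.natAbs ≤ p.2.natAbs} with hS1
  set S2 := {p ∈ S | p.2 < 0 ∧ p.1.natAbs ≤ p.2.natAbs} with hS2
  set S3 := {p ∈ S | 0 < p.1 ∧ p.2.natAbs ≤ p.1.natAbs} with hS3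
  set S4 := {p ∈ S | p.1 < 0 ∧ p.2.natAbs ≤ p.1.natAbs} with hS4
  have hcover : S ⊆ S1 ∪ S2 ∪ S3 ∪ S4 := by
    intro p hp
    have hgcd : Int.gcd p.1 p.2 = 1 := hp.2.2.2
    have hne : ¬(p.1 = 0 ∧ p.2 = 0) := by
      rintro ⟨e1, e2⟩
      rw [e1, e2] at hgcd
      simp [Int.gcd] at hgcd
    simp only [hS1, hS2, hS3, hS4, Set.mem_union, Set.mem_setOf_eq, Set.mem_sep_iff]
    rcases le_or_gt p.1.natAbs p.2.natAbs with hc | hc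
    · rcases lt_trichotomy p.2 0 with h | h | h
      · exact Or.inl (Or.inl (Or.inr ⟨hp, h, hc⟩))
      · exfalso; apply hne; omega
      · exact Or.inl (Or.inl (Or.inl ⟨hp, h, hc⟩))
    · rcases lt_trichotomy p.1 0 with h | h | h
      · exact Or.inr ⟨hp, h, by omega⟩
      · exfalso; omega
      · exact Or.inl (Or.inr ⟨hp, h, by omega⟩)
  -- facts about S
  have hmemL : ∀ p ∈ S, p ∈ L := fun p hp => hp.1
  have hgcdS : ∀ p ∈ S, Int.gcd p.1 p.2 = 1 := fun p hp => hp.2.2.2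
  have hbnd1 : ∀ p ∈ S, p.1.natAbs ≤ N := fun p hp => hp.2.1
  have hbnd2 : ∀ p ∈ S, p.2.natAbs ≤ N := fun p hp => hp.2.2.1
  set B := 2 * (2 * N ^ 2 / d) + 2 with hB
  -- region 1 : directly
  have hc1 : S1.ncard ≤ B := by
    apply sector_count N d hd hN
    · intro p hp q hq; exact index_dvd_det L hd0 (hmemL p hp.1) (hmemL q hq.1)
    · intro p hp; exact hgcdS p hp.1
    · intro p hp; exact ⟨hp.2.1, hp.2.2, hbnd2 p hp.1⟩
  -- region 2 : negate
  have hc2 : S2.ncard ≤ B := by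
    have himg : ((fun p : ℤ × ℤ => -p) '' S2).ncard = S2.ncard :=
      Set.ncard_image_of_injective _ neg_injective
    rw [← himg]
    apply sector_count N d hd hN
    · rintro - ⟨p, hp, rfl⟩ - ⟨q, hq, rfl⟩
      have h := index_dvd_det L hd0 (hmemL p hp.1) (hmemL q hq.1)
      simp only [Prod.fst_neg, Prod.snd_neg]
      convert h using 1; ring
    · rintro - ⟨p, hp, rfl⟩
      have := hgcdS p hp.1
      simpa [Int.gcd, Prod.fst_neg, Prod.snd_neg] using this
    · rintro - ⟨p, hp, rfl⟩
      have h1 := hp.2.1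
      have h2 := hp.2.2
      have h3 := hbnd2 p hp.1
      refine ⟨?_, ?_, ?_⟩ <;> simp only [Prod.fst_neg, Prod.snd_neg, Int.natAbs_neg] <;> omega
  -- region 3 : swap
  have hc3 : S3.ncard ≤ B := by
    have himg : ((fun p : ℤ × ℤ => (p.2, p.1)) '' S3).ncard = S3.ncard := by
      apply Set.ncard_image_of_injective
      intro a b h
      have h1 := congrArg Prod.fst h
      have h2 := congrArg Prod.snd h
      simp at h1 h2
      exact Prod.ext h2 h1
    rw [← himg]
    apply sector_count N d hd hN
    · rintro - ⟨p, hp, rfl⟩ - ⟨q, hq, rfl⟩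
      have h := (index_dvd_det L hd0 (hmemL p hp.1) (hmemL q hq.1)).neg_right
      simp only
      convert h using 1; exacts [rfl, by ring]
    · rintro - ⟨p, hp, rfl⟩
      have := hgcdS p hp.1
      simpa [Int.gcd, Nat.gcd_comm] using this
    · rintro - ⟨p, hp, rfl⟩
      exact ⟨hp.2.1, hp.2.2, hbnd1 p hp.1⟩
  -- region 4 : swap and negate
  have hc4 : S4.ncard ≤ B := by
    have himg : ((fun p : ℤ × ℤ => (-p.2, -p.1)) '' S4).ncard = S4.ncard := by
      apply Set.ncard_image_of_injective
      intro a b h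
      have h1 := congrArg Prod.fst h
      have h2 := congrArg Prod.snd h
      simp at h1 h2
      exact Prod.ext h2 h1
    rw [← himg]
    apply sector_count N d hd hN
    · rintro - ⟨p, hp, rfl⟩ - ⟨q, hq, rfl⟩
      have h := (index_dvd_det L hd0 (hmemL p hp.1) (hmemL q hq.1)).neg_right
      simp only
      convert h using 1; exacts [rfl, by ring]
    · rintro - ⟨p, hp, rfl⟩
      have := hgcdS p hp.1
      simpa [Int.gcd, Nat.gcd_comm] using this
    · rintro - ⟨p, hp, rfl⟩
      have h1 := hp.2.1
      have h2 := hp.2.2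
      have h3 := hbnd1 p hp.1
      refine ⟨?_, ?_, ?_⟩ <;> simp only [Int.natAbs_neg] <;> omega
  -- combine
  have hfin1 : S1.Finite := hSfin.subset (fun p hp => hp.1)
  have hfin2 : S2.Finite := hSfin.subset (fun p hp => hp.1)
  have hfin3 : S3.Finite := hSfin.subset (fun p hp => hp.1)
  have hfin4 : S4.Finite := hSfin.subset (fun p hp => hp.1)
  have hcount : S.ncard ≤ 4 * B := by
    have h0 : S.ncard ≤ (S1 ∪ S2 ∪ S3 ∪ S4).ncard :=
      Set.ncard_le_ncard hcover (((hfin1.union hfin2).union hfin3).union hfin4)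
    have hu1 := Set.ncard_union_le (S1 ∪ S2 ∪ S3) S4
    have hu2 := Set.ncard_union_le (S1 ∪ S2) S3
    have hu3 := Set.ncard_union_le S1 S2
    omega
  -- final arithmetic
  have hdR : (0 : ℝ) < (d : ℝ) := by exact_mod_cast hd
  have hone : (1 : ℝ) ≤ (N : ℝ) ^ 2 / (d : ℝ) := by
    rw [le_div_iff₀ hdR]
    have : (d : ℝ) ≤ (N : ℝ) ^ 2 := by exact_mod_cast hLidx
    linarith
  have hxb : ((2 * N ^ 2 / d : ℕ) : ℝ) ≤ 2 * ((N : ℝ) ^ 2 / (d : ℝ)) := by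
    have h := Nat.cast_div_le (α := ℝ) (m := 2 * N ^ 2) (n := d)
    push_cast at h
    rw [mul_div_assoc] at h
    exact h
  have hnc : (S.ncard : ℝ) ≤ 4 * (2 * ((2 * N ^ 2 / d : ℕ) : ℝ) + 2) := by
    exact_mod_cast hcount
  rw [mul_div_assoc]
  linarith
end

section
/- For any positive integer n, the product over all primes p dividing n of (1 + 1/p) is at most C·log(log n) for an absolute constant C (for n ≥ 3, say). -/
open Finset Real

private lemma cheb (N : ℕ) :
    ∑ p ∈ (Finset.range (N+1)).filter Nat.Prime, Real.log p ≤ N * Real.log 4 := by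
  have h1 : Real.log (primorial N) ≤ Real.log ((4:ℕ) ^ N) := by
    apply Real.log_le_log (by exact_mod_cast primorial_pos N)
    exact_mod_cast primorial_le_4_pow N
  rw [primorial, Nat.cast_prod, Real.log_prod] at h1
  · refine h1.trans (le_of_eq ?_)
    rw [Real.log_pow]; norm_num
  · intro p hp
    simp only [mem_filter] at hp
    exact_mod_cast hp.2.pos.ne'

private lemma legendre_pow_dvd {N p : ℕ} (hp : p.Prime) (hpN : p ≤ N) :
    p ^ (N / p) ∣ Nat.factorial N := by
  rw [Nat.Prime.pow_dvd_factorial_iff hp (Nat.lt_succ_self _)]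
  have h1 : 1 ∈ Finset.Ico 1 (Nat.log p N + 1) := by
    simp only [Finset.mem_Ico]
    exact ⟨le_refl _, by have := Nat.log_pos hp.one_lt hpN; omega⟩
  calc N / p = N / p ^ 1 := by norm_num
    _ ≤ _ := Finset.single_le_sum (f := fun i => N / p ^ i) (fun i _ => Nat.zero_le _) h1

private lemma prod_legendre_dvd (N : ℕ) :
    (∏ p ∈ (Finset.range (N+1)).filter Nat.Prime, p ^ (N / p)) ∣ Nat.factorial N := by
  classical
  set s := (Finset.range (N+1)).filter Nat.Prime with hs
  have hmem : ∀ p ∈ s, p.Prime ∧ p ≤ N := by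
    intro p hp
    simp only [hs, mem_filter, Finset.mem_range] at hp
    exact ⟨hp.2, by omega⟩
  have hne : ∀ p ∈ s, p ^ (N / p) ≠ 0 := fun p hp => pow_ne_zero _ (hmem p hp).1.pos.ne'
  rw [← Nat.factorization_le_iff_dvd (Finset.prod_ne_zero_iff.mpr hne)
    (Nat.factorial_ne_zero N)]
  rw [Nat.factorization_prod hne]
  rw [Finsupp.le_def]
  intro q
  rw [Finsupp.finset_sum_apply]
  have : ∀ p ∈ s, ((p ^ (N / p)).factorization) q
      = if p = q then N / p else 0 := by
    intro p hp
    rw [(hmem p hp).1.factorization_pow]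
    simp [Finsupp.single_apply]
  rw [Finset.sum_congr rfl this]
  rw [Finset.sum_ite_eq']
  by_cases hq : q ∈ s
  · simp only [hq, if_true]
    exact (Nat.Prime.pow_dvd_iff_le_factorization (hmem q hq).1
      (Nat.factorial_ne_zero N)).mp (legendre_pow_dvd (hmem q hq).1 (hmem q hq).2)
  · simp [hq]

private lemma mertens1 {N : ℕ} (hN : 1 ≤ N) :
    ∑ p ∈ (Finset.range (N+1)).filter Nat.Prime, Real.log p / p
      ≤ Real.log N + Real.log 4 := by
  classical
  set s := (Finset.range (N+1)).filter Nat.Prime with hs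
  have hmem : ∀ p ∈ s, p.Prime ∧ p ≤ N := by
    intro p hp
    simp only [hs, mem_filter, Finset.mem_range] at hp
    exact ⟨hp.2, by omega⟩
  have hNpos : (0:ℝ) < N := by exact_mod_cast hN
  -- log of divisibility
  have h1 : ∑ p ∈ s, ((N / p : ℕ) : ℝ) * Real.log p ≤ (N:ℝ) * Real.log N := by
    have hd := prod_legendre_dvd N
    have h2 : Real.log ((∏ p ∈ s, p ^ (N / p) : ℕ) : ℝ) ≤ Real.log (Nat.factorial N : ℝ) := by
      have hpos : 0 < (∏ p ∈ s, p ^ (N / p)) :=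
        Nat.pos_of_ne_zero (Finset.prod_ne_zero_iff.mpr
          (fun p hp => pow_ne_zero _ (hmem p hp).1.pos.ne'))
      exact Real.log_le_log (mod_cast hpos)
        (mod_cast Nat.le_of_dvd (Nat.factorial_pos N) hd)
    rw [Nat.cast_prod, Real.log_prod] at h2
    · have h3 : Real.log (Nat.factorial N : ℝ) ≤ (N:ℝ) * Real.log N := by
        calc Real.log (Nat.factorial N : ℝ) ≤ Real.log ((N:ℝ) ^ N) :=
              Real.log_le_log (mod_cast Nat.factorial_pos N)
                (mod_cast Nat.factorial_le_pow N)
          _ = (N:ℝ) * Real.log N := by rw [Real.log_pow]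
      refine le_trans (le_of_eq ?_) (h2.trans h3)
      apply Finset.sum_congr rfl
      intro p hp
      push_cast
      rw [Real.log_pow]
    · intro p hp
      exact_mod_cast pow_ne_zero _ (hmem p hp).1.pos.ne'
  -- floor bound
  have h4 : ∀ p ∈ s, (N:ℝ) / p * Real.log p - Real.log p ≤ ((N / p : ℕ) : ℝ) * Real.log p := by
    intro p hp
    have hppos : (0:ℝ) < p := by exact_mod_cast (hmem p hp).1.pos
    have hlog : (0:ℝ) ≤ Real.log p := Real.log_natCast_nonneg p
    have hfl : (N:ℝ) / p - 1 ≤ ((N / p : ℕ) : ℝ) := by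
      have hd := Nat.div_add_mod N p
      have hm := Nat.mod_lt N (hmem p hp).1.pos
      have hnat : N < (N / p + 1) * p :=
        (Nat.div_lt_iff_lt_mul (hmem p hp).1.pos).mp (Nat.lt_succ_self _)
      have hr : (N:ℝ) < ((N / p : ℕ) + 1) * p := by exact_mod_cast hnat
      rw [div_sub_one hppos.ne', div_le_iff₀ hppos]
      nlinarith
    nlinarith [hfl, hlog]
  have h5 : ∑ p ∈ s, ((N:ℝ) / p * Real.log p) - ∑ p ∈ s, Real.log p
      ≤ (N:ℝ) * Real.log N := by
    rw [← Finset.sum_sub_distrib]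
    exact le_trans (Finset.sum_le_sum h4) h1
  have h6 := cheb N
  have h7 : ∑ p ∈ s, ((N:ℝ) / p * Real.log p) ≤ (N:ℝ) * Real.log N + N * Real.log 4 := by
    rw [← hs] at h6
    linarith
  have h8 : ∑ p ∈ s, ((N:ℝ) / p * Real.log p) = N * ∑ p ∈ s, Real.log p / p := by
    rw [Finset.mul_sum]
    apply Finset.sum_congr rfl
    intro p hp
    ring
  rw [h8] at h7
  have := (mul_le_mul_iff_right₀ hNpos).mp (by linarith [h7] : (N:ℝ) * ∑ p ∈ s, Real.log p / p ≤ N * (Real.log N + Real.log 4))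
  exact this

noncomputable def aa : ℕ → ℝ := fun m => if m.Prime then Real.log m / m else 0
noncomputable def ff : ℕ → ℝ := fun i => 1 / Real.log (max i 2)
noncomputable def LL : ℕ → ℝ := fun i => Real.log (max i 2)

lemma LL_pos (i : ℕ) : 0 < LL i :=
  Real.log_pos (by exact_mod_cast Nat.lt_of_lt_of_le Nat.one_lt_two (Nat.le_max_right i 2))

lemma log2_le_LL (i : ℕ) : Real.log 2 ≤ LL i := by
  apply Real.log_le_log (by norm_num)
  exact_mod_cast Nat.le_max_right i 2

lemma LL_mono : Monotone LL := fun i j hij => by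
  apply Real.log_le_log
  · exact_mod_cast Nat.lt_of_lt_of_le Nat.zero_lt_two (Nat.le_max_right i 2)
  · exact_mod_cast max_le_max hij (le_refl 2)

lemma ff_eq (i : ℕ) : ff i = 1 / LL i := rfl

lemma aa_nonneg (m : ℕ) : 0 ≤ aa m := by
  unfold aa
  split
  · positivity
  · exact le_refl 0

lemma A_eq (k : ℕ) : ∑ m ∈ Finset.range k, aa m
    = ∑ p ∈ (Finset.range k).filter Nat.Prime, Real.log p / p := by
  rw [Finset.sum_filter]
  simp [aa]

lemma A_nonneg (k : ℕ) : 0 ≤ ∑ m ∈ Finset.range k, aa m :=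
  Finset.sum_nonneg fun m _ => aa_nonneg m

lemma A_le (i : ℕ) : ∑ m ∈ Finset.range (i+1), aa m ≤ LL i + Real.log 4 := by
  rcases Nat.eq_zero_or_pos i with h | h
  · subst h
    have : ∑ m ∈ Finset.range 1, aa m = 0 := by simp [aa]
    rw [this]
    have := LL_pos 0
    have : (0:ℝ) ≤ Real.log 4 := Real.log_nonneg (by norm_num)
    linarith [LL_pos 0]
  · rw [A_eq]
    refine (mertens1 h).trans ?_
    have : Real.log i ≤ LL i := by
      apply Real.log_le_log (by exact_mod_cast h)
      exact_mod_cast Nat.le_max_left i 2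
    linarith

lemma ff_nonneg (i : ℕ) : 0 ≤ ff i := le_of_lt (by rw [ff_eq]; exact one_div_pos.mpr (LL_pos i))

lemma ff_anti {i j : ℕ} (hij : i ≤ j) : ff j ≤ ff i := by
  rw [ff_eq, ff_eq]
  apply one_div_le_one_div_of_le (LL_pos i) (LL_mono hij)

lemma mertens2 {N : ℕ} (hN : 2 ≤ N) :
    ∑ p ∈ (Finset.range (N+1)).filter Nat.Prime, (1:ℝ) / p
      ≤ Real.log (Real.log N)
        + (1 + 2 * (Real.log 4 / Real.log 2) - Real.log (Real.log 2)) := by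
  have hlog2 : 0 < Real.log 2 := Real.log_pos (by norm_num)
  have hlog4 : 0 ≤ Real.log 4 := Real.log_nonneg (by norm_num)
  -- rewrite LHS
  have key : ∑ p ∈ (Finset.range (N+1)).filter Nat.Prime, (1:ℝ) / p
      = ∑ i ∈ Finset.range (N+1), ff i * aa i := by
    rw [Finset.sum_filter]
    apply Finset.sum_congr rfl
    intro i _
    by_cases hi : i.Prime
    · simp only [hi, if_true]
      have h2 : max (i:ℝ) 2 = (i:ℝ) := max_eq_left (by exact_mod_cast hi.two_le)
      have hlogi : Real.log i ≠ 0 :=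
        ne_of_gt (Real.log_pos (by exact_mod_cast hi.one_lt))
      rw [show ff i * aa i = (1 / Real.log (max i 2)) * (Real.log i / i) by
        simp [ff, aa, hi]]
      rw [h2]
      field_simp
    · simp [ff, aa, hi]
  rw [key]
  have abel := Finset.sum_range_by_parts ff aa (N+1)
  simp only [smul_eq_mul, Nat.add_sub_cancel] at abel
  rw [abel]
  set A : ℕ → ℝ := fun k => ∑ m ∈ Finset.range k, aa m with hA
  -- bound the boundary term
  have hb : ff N * A (N+1) ≤ 1 + Real.log 4 / Real.log 2 := by
    have h1 : ff N * A (N+1) ≤ ff N * (LL N + Real.log 4) :=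
      mul_le_mul_of_nonneg_left (A_le N) (ff_nonneg N)
    have h2 : ff N * LL N = 1 := by
      rw [ff_eq]
      field_simp [(LL_pos N).ne']
    have h3 : ff N * Real.log 4 ≤ (1 / Real.log 2) * Real.log 4 :=
      mul_le_mul_of_nonneg_right
        (by rw [ff_eq]; exact one_div_le_one_div_of_le hlog2 (log2_le_LL N)) hlog4
    calc ff N * A (N+1) ≤ ff N * LL N + ff N * Real.log 4 := by rw [← mul_add]; exact h1
      _ ≤ 1 + Real.log 4 / Real.log 2 := by
          rw [h2]; rw [div_eq_inv_mul, ← one_div]; linarith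
  -- bound the sum term
  have hsum : -∑ i ∈ Finset.range N, (ff (i+1) - ff i) * A (i+1)
      ≤ (Real.log (LL N) - Real.log (LL 0)) + Real.log 4 / Real.log 2 := by
    rw [← Finset.sum_neg_distrib]
    have hterm : ∀ i ∈ Finset.range N, -((ff (i+1) - ff i) * A (i+1))
        ≤ (Real.log (LL (i+1)) - Real.log (LL i)) + (ff i - ff (i+1)) * Real.log 4 := by
      intro i _
      have hd : 0 ≤ ff i - ff (i+1) := sub_nonneg.mpr (ff_anti (Nat.le_succ i))
      have h1 : -((ff (i+1) - ff i) * A (i+1)) = (ff i - ff (i+1)) * A (i+1) := by ring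
      rw [h1]
      have h2 : (ff i - ff (i+1)) * A (i+1) ≤ (ff i - ff (i+1)) * (LL i + Real.log 4) :=
        mul_le_mul_of_nonneg_left (A_le i) hd
      have h3 : (ff i - ff (i+1)) * LL i ≤ Real.log (LL (i+1)) - Real.log (LL i) := by
        have hx : 0 < LL (i+1) / LL i := div_pos (LL_pos _) (LL_pos _)
        have := Real.one_sub_inv_le_log_of_pos hx
        rw [Real.log_div (LL_pos _).ne' (LL_pos _).ne'] at this
        have heq : (ff i - ff (i+1)) * LL i = 1 - (LL (i+1) / LL i)⁻¹ := by
          rw [inv_div, ff_eq, ff_eq]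
          field_simp [(LL_pos i).ne', (LL_pos (i+1)).ne']
        rw [heq]
        exact this
      nlinarith [h2, h3]
    refine (Finset.sum_le_sum hterm).trans ?_
    rw [Finset.sum_add_distrib]
    have t1 : ∑ i ∈ Finset.range N, (Real.log (LL (i+1)) - Real.log (LL i))
        = Real.log (LL N) - Real.log (LL 0) :=
      Finset.sum_range_sub (fun i => Real.log (LL i)) N
    have t2 : ∑ i ∈ Finset.range N, (ff i - ff (i+1)) * Real.log 4
        = (ff 0 - ff N) * Real.log 4 := by
      rw [← Finset.sum_mul, Finset.sum_range_sub' ff N]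
    rw [t1, t2]
    have : (ff 0 - ff N) * Real.log 4 ≤ Real.log 4 / Real.log 2 := by
      have : ff 0 - ff N ≤ 1 / Real.log 2 := by
        have := ff_nonneg N
        have : ff 0 ≤ 1 / Real.log 2 := by
          rw [ff_eq]
          exact one_div_le_one_div_of_le hlog2 (log2_le_LL 0)
        linarith [ff_nonneg N]
      calc (ff 0 - ff N) * Real.log 4 ≤ (1 / Real.log 2) * Real.log 4 :=
            mul_le_mul_of_nonneg_right this hlog4
        _ = Real.log 4 / Real.log 2 := by ring
    linarith
  have hLLN : LL N = Real.log N := by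
    unfold LL
    rw [max_eq_left (by exact_mod_cast hN : (2:ℝ) ≤ (N:ℝ))]
  have hLL0 : LL 0 = Real.log 2 := by
    unfold LL
    norm_num
  rw [hLLN, hLL0] at hsum
  have := add_le_add hb hsum
  calc ff N * A (N+1) - ∑ i ∈ Finset.range N, (ff (i+1) - ff i) * A (i+1)
      = ff N * A (N+1) + -∑ i ∈ Finset.range N, (ff (i+1) - ff i) * A (i+1) := by ring
    _ ≤ _ := by linarith [this]


/-- For any positive integer `n ≥ 3`, the product over all primes `p` dividing `n`
of `(1 + 1/p)` is at most `C · log (log n)` for an absolute constant `C`. -/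
theorem stmt_1 :
    ∃ C : ℝ, 0 < C ∧
      ∀ n : ℕ, 3 ≤ n →
        ∏ p ∈ n.primeFactors, (1 + 1 / (p : ℝ)) ≤ C * Real.log (Real.log n) := by
  have hlog2 : 0 < Real.log 2 := Real.log_pos (by norm_num)
  have hll3 : 0 < Real.log (Real.log 3) := by
    apply Real.log_pos
    rw [Real.lt_log_iff_exp_lt (by norm_num)]
    have := Real.exp_one_lt_d9
    linarith
  set B2 : ℝ := (1 + 2 * (Real.log 4 / Real.log 2) - Real.log (Real.log 2)) + 2 / Real.log 2
    with hB2
  refine ⟨Real.exp B2 + 4 / Real.log (Real.log 3), by positivity, ?_⟩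
  intro n hn
  have hn0 : 0 < n := by omega
  have hlln3 : Real.log (Real.log 3) ≤ Real.log (Real.log n) := by
    apply Real.log_le_log (Real.log_pos (by norm_num))
    apply Real.log_le_log (by norm_num)
    exact_mod_cast hn
  have hlln_pos : 0 < Real.log (Real.log n) := lt_of_lt_of_le hll3 hlln3
  by_cases hbig : 16 ≤ n
  · -- main case
    set L : ℝ := Real.log n with hL
    have hL2 : 2 ≤ L := by
      rw [hL, Real.le_log_iff_exp_le (by positivity)]
      rw [show (2:ℝ) = 1 + 1 by norm_num, Real.exp_add]
      have h9 := Real.exp_one_lt_d9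
      have hp := Real.exp_pos 1
      have : (n:ℝ) ≥ 16 := by exact_mod_cast hbig
      nlinarith
    set y : ℕ := ⌊L⌋₊ with hy
    have hy2 : 2 ≤ y := Nat.le_floor (by exact_mod_cast hL2)
    have hyL : (y:ℝ) ≤ L := Nat.floor_le (by linarith)
    have hyL2 : L / 2 < (y:ℝ) := by
      have := Nat.lt_floor_add_one L
      have : L - 1 < (y:ℝ) := by linarith [Nat.lt_floor_add_one L]
      linarith
    have hypos : (0:ℝ) < y := by positivity
    -- card bound
    set k : ℕ := n.primeFactors.card with hk
    have hkL : (k:ℝ) * Real.log 2 ≤ L := by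
      have h2k : 2 ^ k ≤ n := by
        calc 2 ^ k ≤ ∏ p ∈ n.primeFactors, p :=
              Finset.pow_card_le_prod _ _ _ (fun p hp => (Nat.prime_of_mem_primeFactors hp).two_le)
          _ ≤ n := Nat.le_of_dvd hn0 (Nat.prod_primeFactors_dvd n)
      have hc : ((2:ℝ))^k ≤ (n:ℝ) := by exact_mod_cast h2k
      have := Real.log_le_log (by positivity : (0:ℝ) < (2:ℝ)^k) hc
      rwa [Real.log_pow] at this
    -- sum bound
    have hS : ∑ p ∈ n.primeFactors, 1 / (p:ℝ)
        ≤ Real.log (Real.log L) + B2 := by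
      rw [← Finset.sum_filter_add_sum_filter_not n.primeFactors (· ≤ y)]
      have hsmall : ∑ p ∈ n.primeFactors.filter (· ≤ y), 1 / (p:ℝ)
          ≤ Real.log (Real.log y)
            + (1 + 2 * (Real.log 4 / Real.log 2) - Real.log (Real.log 2)) := by
        refine le_trans ?_ (mertens2 hy2)
        apply Finset.sum_le_sum_of_subset_of_nonneg
        · intro p hp
          simp only [Finset.mem_filter, Finset.mem_range] at *
          exact ⟨by omega, Nat.prime_of_mem_primeFactors hp.1⟩
        · intro p _ _
          positivity
      have hlarge : ∑ p ∈ n.primeFactors.filter (fun p => ¬ p ≤ y), 1 / (p:ℝ)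
          ≤ 2 / Real.log 2 := by
        have h1 : ∑ p ∈ n.primeFactors.filter (fun p => ¬ p ≤ y), 1 / (p:ℝ)
            ≤ ∑ _p ∈ n.primeFactors.filter (fun p => ¬ p ≤ y), 1 / (y:ℝ) := by
          apply Finset.sum_le_sum
          intro p hp
          simp only [Finset.mem_filter] at hp
          have : (y:ℝ) ≤ p := by exact_mod_cast le_of_lt (by omega : y < p)
          exact one_div_le_one_div_of_le hypos this
        rw [Finset.sum_const, nsmul_eq_mul] at h1
        have hcard : ((n.primeFactors.filter (fun p => ¬ p ≤ y)).card : ℝ) ≤ k := by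
          exact_mod_cast Finset.card_le_card (Finset.filter_subset _ _)
        have hy' : 1/(y:ℝ) ≤ 2/L := by
          rw [div_le_div_iff₀ hypos (by linarith : (0:ℝ) < L)]
          linarith
        have h2 : ((n.primeFactors.filter (fun p => ¬ p ≤ y)).card : ℝ) * (1/(y:ℝ))
            ≤ (k:ℝ) * (2 / L) :=
          mul_le_mul hcard hy' (by positivity) (Nat.cast_nonneg k)
        have h3 : (k:ℝ) * (2/L) ≤ 2 / Real.log 2 := by
          rw [mul_div_assoc', div_le_div_iff₀ (by linarith : (0:ℝ) < L) hlog2]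
          nlinarith [hkL]
        linarith
      have hmono : Real.log (Real.log y) ≤ Real.log (Real.log L) := by
        have hy1 : (1:ℝ) < (y:ℝ) := by exact_mod_cast (by omega : 1 < y)
        exact Real.log_le_log (Real.log_pos hy1)
          (Real.log_le_log (by linarith) hyL)
      rw [hB2]
      linarith
    -- product bound
    have hprod : ∏ p ∈ n.primeFactors, (1 + 1 / (p:ℝ))
        ≤ Real.exp (∑ p ∈ n.primeFactors, 1 / (p:ℝ)) := by
      rw [Real.exp_sum]
      apply Finset.prod_le_prod
      · intro p hp; positivity
      · intro p hp
        have := Real.add_one_le_exp (1 / (p:ℝ))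
        linarith
    have hLpos : 0 < Real.log L := by
      apply Real.log_pos; linarith
    calc ∏ p ∈ n.primeFactors, (1 + 1 / (p:ℝ))
        ≤ Real.exp (∑ p ∈ n.primeFactors, 1 / (p:ℝ)) := hprod
      _ ≤ Real.exp (Real.log (Real.log L) + B2) := Real.exp_le_exp.mpr (by linarith)
      _ = Real.log L * Real.exp B2 := by rw [Real.exp_add, Real.exp_log hLpos]
      _ ≤ (Real.exp B2 + 4 / Real.log (Real.log 3)) * Real.log (Real.log n) := by
          rw [hL]
          have h4 : 0 < 4 / Real.log (Real.log 3) := by positivity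
          nlinarith [hlln_pos]
  · -- small case : n ≤ 15
    push_neg at hbig
    have hsub : n.primeFactors ⊆ (Finset.range 16).filter Nat.Prime := by
      intro p hp
      simp only [Finset.mem_filter, Finset.mem_range]
      have hple := Nat.le_of_dvd hn0 (Nat.dvd_of_mem_primeFactors hp)
      exact ⟨by omega, Nat.prime_of_mem_primeFactors hp⟩
    have hprod4 : ∏ p ∈ n.primeFactors, (1 + 1 / (p:ℝ)) ≤ 4 := by
      have h1 : ∏ p ∈ n.primeFactors, (1 + 1 / (p:ℝ))
          ≤ ∏ p ∈ (Finset.range 16).filter Nat.Prime, (1 + 1 / (p:ℝ)) := by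
        rw [← Finset.prod_sdiff hsub]
        have hrest : (1:ℝ) ≤ ∏ p ∈ ((Finset.range 16).filter Nat.Prime) \ n.primeFactors,
            (1 + 1 / (p:ℝ)) := by
          have h0 := Finset.prod_le_prod (s := ((Finset.range 16).filter Nat.Prime) \ n.primeFactors)
            (f := fun _ : ℕ => (1:ℝ)) (g := fun p : ℕ => 1 + 1/(p:ℝ))
            (fun p _ => by norm_num)
            (fun p _ => by
              have : (0:ℝ) ≤ 1 / (p:ℝ) := by positivity
              linarith)
          rwa [Finset.prod_const_one] at h0
        have hpf : (0:ℝ) ≤ ∏ p ∈ n.primeFactors, (1 + 1 / (p:ℝ)) :=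
          Finset.prod_nonneg (fun p _ => by positivity)
        nlinarith [hrest, hpf]
      refine h1.trans ?_
      rw [Finset.prod_filter]
      norm_num [Finset.prod_range_succ]
    calc ∏ p ∈ n.primeFactors, (1 + 1 / (p:ℝ)) ≤ 4 := hprod4
      _ = (4 / Real.log (Real.log 3)) * Real.log (Real.log 3) := by field_simp
      _ ≤ (4 / Real.log (Real.log 3)) * Real.log (Real.log n) := by
          apply mul_le_mul_of_nonneg_left hlln3 (by positivity)
      _ ≤ _ := by
          have : 0 < Real.exp B2 := Real.exp_pos _
          nlinarith [hlln_pos]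
end

section
/- Let p be a prime and let L, L' ⊆ Z^2 be two distinct lattices each of index p^n. Then no point (x,y) with p ∤ gcd(x,y) lies in both L and L'; that is, (A_p ∩ L) and (A_p ∩ L') are disjoint, where A_p = {(x,y) ∈ Z^2 : p ∤ gcd(x,y)}. -/
/-- If a subgroup `K` of `ℤ × ℤ` contains `(N,0)`, `(0,N)` and `(x,y)` with
`gcd x y` coprime to `N`, then its index divides `N`. -/
lemma aux_index_dvd (N : ℕ) (x y : ℤ) (K : AddSubgroup (ℤ × ℤ))
    (h1 : ((N : ℤ), 0) ∈ K) (h2 : (0, (N : ℤ)) ∈ K) (h3 : (x, y) ∈ K)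
    (hcop : Nat.Coprime (Int.gcd x y) N) : K.index ∣ N := by
  -- get a' x + b' y = 1 - v N
  obtain ⟨u, w, huw⟩ := (Nat.isCoprime_iff_coprime.mpr hcop)
  set a' : ℤ := u * Int.gcdA x y with ha'
  set b' : ℤ := u * Int.gcdB x y with hb'
  have hkey : a' * x + b' * y + w * N = 1 := by
    have := Int.gcd_eq_gcd_ab x y
    have : u * (Int.gcd x y : ℤ) = a' * x + b' * y := by
      rw [this, ha', hb']; ring
    linarith [huw, this]
  -- the candidate generator of the quotient
  set Q := (ℤ × ℤ) ⧸ K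
  set g0 : Q := QuotientAddGroup.mk' K (b', -a') with hg0
  set φ : ℤ →+ Q := zmultiplesHom Q g0 with hφ
  have hmemN : ∀ m k : ℤ, (N * m, N * k) ∈ K := by
    intro m k
    have : ((N : ℤ) * m, (N : ℤ) * k) = m • ((N : ℤ), 0) + k • (0, (N : ℤ)) := by
      simp [Prod.ext_iff, mul_comm]
    rw [this]
    exact K.add_mem (K.zsmul_mem h1 m) (K.zsmul_mem h2 k)
  have hφN : φ (N : ℤ) = 0 := by
    show (N : ℤ) • g0 = 0
    rw [hg0, ← map_zsmul]
    rw [QuotientAddGroup.mk'_apply, QuotientAddGroup.eq_zero_iff]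
    have : (N : ℤ) • ((b' : ℤ), -a') = ((N : ℤ) * b', (N : ℤ) * (-a')) := by
      simp [Prod.ext_iff, mul_comm]
    rw [this]
    exact hmemN b' (-a')
  have hφsurj : Function.Surjective φ := by
    intro q
    obtain ⟨⟨m, k⟩, rfl⟩ := QuotientAddGroup.mk'_surjective K q
    refine ⟨m * y - k * x, ?_⟩
    show (m * y - k * x) • g0 = QuotientAddGroup.mk' K (m, k)
    rw [hg0, ← map_zsmul, QuotientAddGroup.mk'_eq_mk']
    refine ⟨(m * a' + k * b') • (x, y) + ((N : ℤ) * (m * w), (N : ℤ) * (k * w)), ?_, ?_⟩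
    · exact K.add_mem (K.zsmul_mem h3 _) (hmemN _ _)
    · simp only [Prod.ext_iff, Prod.fst_add, Prod.snd_add, Prod.smul_fst, Prod.smul_snd,
        smul_eq_mul, Prod.mk_add_mk, Prod.mk.injEq]
      constructor
      · linear_combination m * hkey
      · linear_combination k * hkey
  -- lift to ZMod N
  set ψ : ZMod N →+ Q := ZMod.lift N ⟨φ, hφN⟩ with hψ
  have hψsurj : Function.Surjective ψ := by
    intro q
    obtain ⟨z, hz⟩ := hφsurj q
    exact ⟨(z : ZMod N), by rw [hψ, ZMod.lift_coe]; exact hz⟩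
  have := AddSubgroup.card_dvd_of_surjective ψ hψsurj
  rwa [Nat.card_zmod] at this

/-- Let `p` be a prime and `L, L' ⊆ ℤ²` two distinct lattices each of index `pⁿ`.
Then no point `(x,y)` with `p ∤ gcd(x,y)` lies in both `L` and `L'`. -/
theorem stmt_2 (p : ℕ) (hp : p.Prime) (n : ℕ) (L L' : AddSubgroup (ℤ × ℤ))
    (hL : L.index = p ^ n) (hL' : L'.index = p ^ n) (hne : L ≠ L') :
    ∀ x y : ℤ, ¬ (p ∣ Int.gcd x y) → ¬ ((x, y) ∈ L ∧ (x, y) ∈ L') := by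
  intro x y hpdvd ⟨hxyL, hxyL'⟩
  have hcop : Nat.Coprime (Int.gcd x y) (p ^ n) :=
    Nat.Coprime.pow_right n ((hp.coprime_iff_not_dvd.mpr hpdvd).symm)
  set N : ℕ := p ^ n with hNdef
  have hNpos : 0 < N := pow_pos hp.pos n
  set K : AddSubgroup (ℤ × ℤ) :=
    AddSubgroup.closure {((N : ℤ), 0), (0, (N : ℤ)), (x, y)} with hK
  have h1K : ((N : ℤ), 0) ∈ K := AddSubgroup.subset_closure (by simp)
  have h2K : (0, (N : ℤ)) ∈ K := AddSubgroup.subset_closure (by simp)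
  have h3K : (x, y) ∈ K := AddSubgroup.subset_closure (by simp)
  have hKdvd : K.index ∣ N := aux_index_dvd N x y K h1K h2K h3K hcop
  have claim : ∀ M : AddSubgroup (ℤ × ℤ), M.index = N → (x, y) ∈ M → M = K := by
    intro M hM hxyM
    have hNsmul : ∀ g : ℤ × ℤ, N • g ∈ M := fun g => hM ▸ AddSubgroup.nsmul_index_mem M g
    have hKM : K ≤ M := by
      rw [hK, AddSubgroup.closure_le]
      rintro z hz
      simp only [Set.mem_insert_iff, Set.mem_singleton_iff] at hz
      rcases hz with rfl | rfl | rfl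
      · have := hNsmul ((1 : ℤ), (0 : ℤ)); simpa using this
      · have := hNsmul ((0 : ℤ), (1 : ℤ)); simpa using this
      · exact hxyM
    have hdvd2 : N ∣ K.index := hM ▸ AddSubgroup.index_dvd_of_le hKM
    have hKidx : K.index = N := Nat.dvd_antisymm hKdvd hdvd2
    have hrel : K.relIndex M * M.index = K.index := AddSubgroup.relIndex_mul_index hKM
    rw [hM, hKidx] at hrel
    have h1 : K.relIndex M = 1 :=
      Nat.eq_of_mul_eq_mul_right hNpos (by rw [one_mul]; exact hrel)
    exact le_antisymm (AddSubgroup.relIndex_eq_one.mp h1) hKM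
  exact hne ((claim L hL hxyL).trans (claim L' hL' hxyL').symm)
end

section
/- Let L ⊆ Z^2 be a lattice and let L', L'' ⊆ L be cosets of lattices contained in L. Then L' ∩ L'' is either empty or a coset of a lattice whose index in Z^2 divides [Z^2 : L']·[Z^2 : L'']/[Z^2 : L]. -/
open scoped Pointwise

lemma my_le_of_coset_subset (L M : AddSubgroup (ℤ × ℤ)) (a : ℤ × ℤ)
    (ha : a +ᵥ (M : Set (ℤ × ℤ)) ⊆ (L : Set (ℤ × ℤ))) : M ≤ L := by
  intro m hm
  have h1 : a + m ∈ L := ha ⟨m, hm, rfl⟩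
  have h2 : a ∈ L := ha ⟨0, M.zero_mem, by simp⟩
  simpa using L.sub_mem h1 h2

lemma my_relIndex_dvd (L M M' : AddSubgroup (ℤ × ℤ)) (hML : M ≤ L) (hM'L : M' ≤ L) :
    (M ⊓ M').relIndex L ∣ M.relIndex L * M'.relIndex L := by
  have h1 : M.relIndex (M' ⊓ L) * M'.relIndex L = (M ⊓ M').relIndex L :=
    AddSubgroup.relIndex_inf_mul_relIndex M M' L
  rw [inf_of_le_left hM'L] at h1
  rw [← h1]
  have h2 : M.relIndex M' ∣ M.relIndex L := by
    rw [← AddSubgroup.relIndex_addSubgroupOf hM'L,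
      show M.relIndex L = (M.addSubgroupOf L).index from rfl]
    exact AddSubgroup.relIndex_dvd_index_of_normal _ _
  exact mul_dvd_mul h2 dvd_rfl

/-- Let `L ⊆ ℤ²` be a lattice and `L' = a + M`, `L'' = b + M'` cosets of lattices,
both contained in `L`.  Then `L' ∩ L''` is either empty or a coset of a lattice `P`
whose index in `ℤ²` divides `[ℤ² : L'] · [ℤ² : L''] / [ℤ² : L]`
(expressed multiplicatively as `[ℤ² : P] · [ℤ² : L] ∣ [ℤ² : L'] · [ℤ² : L'']`). -/
theorem stmt_3 (L M M' : AddSubgroup (ℤ × ℤ)) (a b : ℤ × ℤ)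
    (hL : L.FiniteIndex) (hM : M.FiniteIndex) (hM' : M'.FiniteIndex)
    (ha : a +ᵥ (M : Set (ℤ × ℤ)) ⊆ (L : Set (ℤ × ℤ)))
    (hb : b +ᵥ (M' : Set (ℤ × ℤ)) ⊆ (L : Set (ℤ × ℤ))) :
    (a +ᵥ (M : Set (ℤ × ℤ))) ∩ (b +ᵥ (M' : Set (ℤ × ℤ))) = ∅ ∨
      ∃ (P : AddSubgroup (ℤ × ℤ)) (c : ℤ × ℤ), P.FiniteIndex ∧
        P.index * L.index ∣ M.index * M'.index ∧
        (a +ᵥ (M : Set (ℤ × ℤ))) ∩ (b +ᵥ (M' : Set (ℤ × ℤ))) = c +ᵥ (P : Set (ℤ × ℤ)) := by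
  rcases Set.eq_empty_or_nonempty ((a +ᵥ (M : Set (ℤ × ℤ))) ∩ (b +ᵥ (M' : Set (ℤ × ℤ)))) with
    h | ⟨c, hca, hcb⟩
  · exact Or.inl h
  right
  refine ⟨M ⊓ M', c, ?_, ?_, ?_⟩
  · infer_instance
  · -- index divisibility
    have hML : M ≤ L := my_le_of_coset_subset L M a ha
    have hM'L : M' ≤ L := my_le_of_coset_subset L M' b hb
    have key := my_relIndex_dvd L M M' hML hM'L
    have e1 : (M ⊓ M').relIndex L * L.index = (M ⊓ M').index :=
      AddSubgroup.relIndex_mul_index (le_trans inf_le_left hML)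
    have e2 : M.relIndex L * L.index = M.index := AddSubgroup.relIndex_mul_index hML
    have e3 : M'.relIndex L * L.index = M'.index := AddSubgroup.relIndex_mul_index hM'L
    calc (M ⊓ M').index * L.index = ((M ⊓ M').relIndex L * L.index) * L.index := by rw [e1]
      _ ∣ (M.relIndex L * M'.relIndex L * L.index) * L.index := by
          exact mul_dvd_mul (mul_dvd_mul key dvd_rfl) dvd_rfl
      _ = (M.relIndex L * L.index) * (M'.relIndex L * L.index) := by ring
      _ = M.index * M'.index := by rw [e2, e3]
  · -- set equality
    have hmem : ∀ (N : AddSubgroup (ℤ × ℤ)) (d x : ℤ × ℤ),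
        x ∈ d +ᵥ (N : Set (ℤ × ℤ)) ↔ x - d ∈ N := by
      intro N d x
      rw [Set.mem_vadd_set_iff_neg_vadd_mem, vadd_eq_add, neg_add_eq_sub]
      rfl
    have hca' : c - a ∈ M := (hmem M a c).mp hca
    have hcb' : c - b ∈ M' := (hmem M' b c).mp hcb
    ext x
    simp only [Set.mem_inter_iff, hmem, AddSubgroup.mem_inf]
    constructor
    · rintro ⟨hxa, hxb⟩
      constructor
      · have := M.sub_mem hxa hca'
        rwa [sub_sub_sub_cancel_right] at this
      · have := M'.sub_mem hxb hcb'
        rwa [sub_sub_sub_cancel_right] at this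
    · rintro ⟨h1, h2⟩
      constructor
      · have := M.add_mem h1 hca'
        rwa [sub_add_sub_cancel] at this
      · have := M'.add_mem h2 hcb'
        rwa [sub_add_sub_cancel] at this
end

section
/- Let k be a positive integer. Then the sum over square-full integers n > N of τ_k(n)/n is O((log N)^{k^2 + k^3 - 2} / N^{1/2}), with implied constant depending only on k. -/
open scoped Classical

open scoped ENNReal

/-- `τ_k(n)`: the number of `k`-tuples of positive integers with product `n`. -/
noncomputable def tauk (k n : ℕ) : ℕ :=
  Nat.card {f : Fin k → ℕ // (∀ i, 0 < f i) ∧ ∏ i, f i = n}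

/-- A positive integer is square-full if `p² ∣ n` for every prime `p ∣ n`. -/
def Squarefull (n : ℕ) : Prop := ∀ p : ℕ, p.Prime → p ∣ n → p ^ 2 ∣ n

namespace SF10


abbrev Tup (j : ℕ) := Fin j → ℕ+

def phi {j : ℕ} (c : Tup j) : ℕ := ∏ i, (c i : ℕ)

lemma phi_pos {j : ℕ} (c : Tup j) : 0 < phi c :=
  Finset.prod_pos (fun i _ => (c i).pos)

lemma phi_cons {j : ℕ} (d : ℕ+) (c : Tup j) : phi (Fin.cons d c) = (d : ℕ) * phi c := by
  unfold phi
  rw [Fin.prod_univ_succ]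
  simp

abbrev D (j n : ℕ) := {c : Tup j // phi c = n}

lemma D_finite {j n : ℕ} (hn : 0 < n) : Finite (D j n) := by
  refine Finite.of_injective (fun c => (fun i => (⟨(c.1 i : ℕ), ?_⟩ : Fin (n+1)))) ?_
  · have hd : ((c.1 i : ℕ)) ∣ phi c.1 := Finset.dvd_prod_of_mem _ (Finset.mem_univ i)
    rw [c.2] at hd
    exact Nat.lt_succ_of_le (Nat.le_of_dvd hn hd)
  · intro c c' h
    apply Subtype.ext; funext i
    have := congrFun h i
    have h2 : ((c.1 i : ℕ)) = ((c'.1 i : ℕ)) := congrArg Fin.val this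
    exact PNat.coe_injective h2

lemma exists_split : ∀ (j : ℕ) (d : Fin j → ℕ) (u : ℕ), 0 < u → u ∣ ∏ i, d i →
    ∃ a : Fin j → ℕ, (∀ i, a i ∣ d i) ∧ ∏ i, a i = u := by
  intro j
  induction j with
  | zero =>
    intro d u hu hdvd
    simp only [Finset.univ_eq_empty, Finset.prod_empty, Nat.dvd_one] at hdvd
    exact ⟨fun i => i.elim0, fun i => i.elim0, by simp [hdvd]⟩
  | succ j ih =>
    intro d u hu hdvd
    rw [Fin.prod_univ_succ] at hdvd
    set g := Nat.gcd u (d 0) with hg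
    have hgpos : 0 < g := Nat.gcd_pos_of_pos_left _ hu
    have hgu : g ∣ u := Nat.gcd_dvd_left _ _
    have hgd : g ∣ d 0 := Nat.gcd_dvd_right _ _
    set u' := u / g with hu'
    have huu : u = g * u' := (Nat.mul_div_cancel' hgu).symm
    have hu'pos : 0 < u' := by
      rcases Nat.eq_zero_or_pos u' with h0 | h; · simp [h0] at huu; omega
      exact h
    have hcop : u'.Coprime (d 0 / g) := Nat.coprime_div_gcd_div_gcd hgpos
    have hdvd' : u' ∣ (d 0 / g) * ∏ i : Fin j, d i.succ := by
      have : g * u' ∣ g * ((d 0 / g) * ∏ i : Fin j, d i.succ) := by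
        rw [← mul_assoc, Nat.mul_div_cancel' hgd, ← huu]; exact hdvd
      exact (Nat.mul_dvd_mul_iff_left hgpos).mp this
    have hdvd'' : u' ∣ ∏ i : Fin j, d i.succ := hcop.dvd_of_dvd_mul_left hdvd'
    obtain ⟨a, ha1, ha2⟩ := ih (fun i => d i.succ) u' hu'pos hdvd''
    refine ⟨Fin.cons g a, ?_, ?_⟩
    · intro i
      refine Fin.cases ?_ ?_ i
      · simpa using hgd
      · intro i'; simpa using ha1 i'
    · rw [Fin.prod_cons, ha2, ← huu]

lemma card_D_mul (j u v : ℕ) (hu : 0 < u) (hv : 0 < v) :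
    Nat.card (D j (u*v)) ≤ Nat.card (D j u) * Nat.card (D j v) := by
  classical
  haveI : Finite (D j u) := D_finite hu
  haveI : Finite (D j v) := D_finite hv
  rw [← Nat.card_prod]
  have key : ∀ c : D j (u*v), ∃ p : (D j u) × (D j v),
      ∀ i, (c.1 i : ℕ) = (p.1.1 i : ℕ) * (p.2.1 i : ℕ) := by
    intro c
    have hdvd : u ∣ ∏ i, (c.1 i : ℕ) := by
      rw [show (∏ i, (c.1 i : ℕ)) = phi c.1 from rfl, c.2]; exact Dvd.intro _ rfl
    obtain ⟨a, ha1, ha2⟩ := exists_split j (fun i => (c.1 i : ℕ)) u hu hdvd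
    have hapos : ∀ i, 0 < a i := by
      intro i
      rcases Nat.eq_zero_or_pos (a i) with h0 | h; swap; · exact h
      exfalso
      have : (∏ i, a i) = 0 := Finset.prod_eq_zero (Finset.mem_univ i) h0
      omega
    have hbpos : ∀ i, 0 < (c.1 i : ℕ) / a i := by
      intro i
      have h1 : a i * ((c.1 i : ℕ) / a i) = (c.1 i : ℕ) := Nat.mul_div_cancel' (ha1 i)
      rcases Nat.eq_zero_or_pos ((c.1 i : ℕ) / a i) with h0 | h
      · exfalso; rw [h0, mul_zero] at h1; exact absurd h1.symm (c.1 i).pos.ne'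
      · exact h
    have hprodsplit : (∏ i, (c.1 i : ℕ)) = (∏ i, a i) * ∏ i, ((c.1 i : ℕ) / a i) := by
      rw [← Finset.prod_mul_distrib]
      exact Finset.prod_congr rfl (fun i _ => (Nat.mul_div_cancel' (ha1 i)).symm)
    have hphiv : (∏ i, ((c.1 i : ℕ) / a i)) = v := by
      have h1 : u * (∏ i, ((c.1 i : ℕ) / a i)) = u * v := by
        calc u * (∏ i, ((c.1 i : ℕ) / a i))
            = (∏ i, a i) * ∏ i, ((c.1 i : ℕ) / a i) := by rw [ha2]
          _ = ∏ i, (c.1 i : ℕ) := hprodsplit.symm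
          _ = u * v := c.2
      exact Nat.eq_of_mul_eq_mul_left hu h1
    refine ⟨⟨⟨fun i => ⟨a i, hapos i⟩, ?_⟩, ⟨fun i => ⟨(c.1 i : ℕ) / a i, hbpos i⟩, ?_⟩⟩, ?_⟩
    · show (∏ i, a i) = u; exact ha2
    · show (∏ i, ((c.1 i : ℕ) / a i)) = v; exact hphiv
    · intro i
      exact (Nat.mul_div_cancel' (ha1 i)).symm
  choose Φ hΦ using key
  apply Nat.card_le_card_of_injective Φ
  intro c c' h
  apply Subtype.ext; funext i
  apply PNat.coe_injective
  rw [hΦ c i, hΦ c' i, h]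

lemma refine_exists : ∀ (j m : ℕ) (d : Tup j) (e : Tup m), phi d = phi e →
    ∃ c : Fin j → Tup m, (∀ i, phi (c i) = (d i : ℕ)) ∧
      (∀ l, (∏ i, ((c i l : ℕ))) = (e l : ℕ)) := by
  intro j
  induction j with
  | zero =>
    intro m d e h
    have h1 : phi e = 1 := by
      rw [← h]; simp [phi]
    have he : ∀ l, (e l : ℕ) = 1 := by
      intro l
      have := Finset.prod_eq_one_iff_of_one_le' ?_ |>.mp h1 l (Finset.mem_univ l)
      · exact this
      · intro i _; exact (e i).one_le
    exact ⟨fun i => i.elim0, fun i => i.elim0, fun l => by simp [he l]⟩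
  | succ j ih =>
    intro m d e h
    have hdvd : ((d 0 : ℕ)) ∣ ∏ l, (e l : ℕ) := by
      have : ((d 0 : ℕ)) ∣ phi d := by
        unfold phi; rw [Fin.prod_univ_succ]; exact Dvd.intro _ rfl
      rwa [h] at this
    obtain ⟨a, ha1, ha2⟩ := exists_split m (fun l => (e l : ℕ)) (d 0 : ℕ) (d 0).pos hdvd
    have hapos : ∀ l, 0 < a l := by
      intro l
      rcases Nat.eq_zero_or_pos (a l) with h0 | hp; swap; · exact hp
      exfalso
      have : (∏ l, a l) = 0 := Finset.prod_eq_zero (Finset.mem_univ l) h0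
      have := (d 0).pos; omega
    have hbpos : ∀ l, 0 < (e l : ℕ) / a l := by
      intro l
      have h1 : a l * ((e l : ℕ) / a l) = (e l : ℕ) := Nat.mul_div_cancel' (ha1 l)
      rcases Nat.eq_zero_or_pos ((e l : ℕ) / a l) with h0 | hp
      · exfalso; rw [h0, mul_zero] at h1; exact absurd h1.symm (e l).pos.ne'
      · exact hp
    set e' : Tup m := fun l => ⟨(e l : ℕ) / a l, hbpos l⟩ with he'
    have hsplit : phi e = (d 0 : ℕ) * phi e' := by
      unfold phi
      rw [← ha2, ← Finset.prod_mul_distrib]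
      exact Finset.prod_congr rfl (fun l _ => (Nat.mul_div_cancel' (ha1 l)).symm)
    have htail : phi (Fin.tail d) = phi e' := by
      have h1 : (d 0 : ℕ) * phi (Fin.tail d) = (d 0 : ℕ) * phi e' := by
        rw [← hsplit, ← h]
        unfold phi
        rw [Fin.prod_univ_succ]
        rfl
      exact Nat.eq_of_mul_eq_mul_left (d 0).pos h1
    obtain ⟨c', hc1, hc2⟩ := ih m (Fin.tail d) e' htail
    refine ⟨Fin.cons (fun l => Nat.toPNat (a l) (hapos l)) c', ?_, ?_⟩
    · intro i
      refine Fin.cases ?_ ?_ i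
      · show phi _ = (d 0 : ℕ)
        simp only [Fin.cons_zero]
        unfold phi
        exact ha2
      · intro i'
        exact hc1 i'
    · intro l
      rw [Fin.prod_univ_succ]
      simp only [Fin.cons_zero, Fin.cons_succ]
      have : (∏ i : Fin j, ((c' i l : ℕ))) = (e' l : ℕ) := hc2 l
      rw [this]
      show a l * ((e l : ℕ) / a l) = (e l : ℕ)
      exact Nat.mul_div_cancel' (ha1 l)

lemma card_D_mul_card_D (j m u : ℕ) (hu : 0 < u) :
    Nat.card (D j u) * Nat.card (D m u) ≤ Nat.card (D (j*m) u) := by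
  classical
  haveI : Finite (D (j*m) u) := D_finite hu
  rw [← Nat.card_prod]
  have key : ∀ p : (D j u) × (D m u), ∃ q : D (j*m) u,
      (∀ i, (p.1.1 i : ℕ) = ∏ l, ((q.1 (finProdFinEquiv (i,l)) : ℕ))) ∧
      (∀ l, (p.2.1 l : ℕ) = ∏ i, ((q.1 (finProdFinEquiv (i,l)) : ℕ))) := by
    rintro ⟨⟨d, hd⟩, ⟨e, he⟩⟩
    obtain ⟨c, hc1, hc2⟩ := refine_exists j m d e (by rw [hd, he])
    have hq : phi (fun x : Fin (j*m) => c (finProdFinEquiv.symm x).1 (finProdFinEquiv.symm x).2) = u := by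
      unfold phi
      rw [← Equiv.prod_comp finProdFinEquiv (fun x => ((c (finProdFinEquiv.symm x).1 (finProdFinEquiv.symm x).2 : ℕ)))]
      simp only [Equiv.symm_apply_apply]
      rw [Fintype.prod_prod_type]
      calc (∏ i, ∏ l, ((c i l : ℕ))) = ∏ i, phi (c i) := rfl
        _ = ∏ i, (d i : ℕ) := Finset.prod_congr rfl (fun i _ => hc1 i)
        _ = u := hd
    refine ⟨⟨_, hq⟩, ?_, ?_⟩
    · intro i
      simp only [Equiv.symm_apply_apply]
      exact (hc1 i).symm
    · intro l
      simp only [Equiv.symm_apply_apply]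
      exact (hc2 l).symm
  choose Ψ h1 h2 using key
  apply Nat.card_le_card_of_injective Ψ
  rintro p p' h
  have hd : p.1 = p'.1 := by
    apply Subtype.ext; funext i
    apply PNat.coe_injective
    rw [h1 p i, h1 p' i, h]
  have he : p.2 = p'.2 := by
    apply Subtype.ext; funext l
    apply PNat.coe_injective
    rw [h2 p l, h2 p' l, h]
  exact Prod.ext hd he

lemma tau_chain (k : ℕ) (a b : ℕ+) :
    Nat.card (D k ((a:ℕ)^2 * (b:ℕ)^3)) ≤ Nat.card (D (k*k) (a:ℕ)) * Nat.card (D (k*k*k) (b:ℕ)) := by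
  have ha : (0:ℕ) < (a:ℕ)^2 := pow_pos a.pos 2
  have hb : (0:ℕ) < (b:ℕ)^3 := pow_pos b.pos 3
  calc Nat.card (D k ((a:ℕ)^2 * (b:ℕ)^3))
      ≤ Nat.card (D k ((a:ℕ)^2)) * Nat.card (D k ((b:ℕ)^3)) := card_D_mul k _ _ ha hb
    _ ≤ (Nat.card (D (k*k) (a:ℕ))) * Nat.card (D (k*k*k) (b:ℕ)) := by
        apply Nat.mul_le_mul
        · calc Nat.card (D k ((a:ℕ)^2)) = Nat.card (D k ((a:ℕ)*(a:ℕ))) := by rw [sq]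
            _ ≤ Nat.card (D k (a:ℕ)) * Nat.card (D k (a:ℕ)) := card_D_mul k _ _ a.pos a.pos
            _ ≤ Nat.card (D (k*k) (a:ℕ)) := card_D_mul_card_D k k _ a.pos
        · calc Nat.card (D k ((b:ℕ)^3)) = Nat.card (D k ((b:ℕ)*((b:ℕ)*(b:ℕ)))) := by ring_nf
            _ ≤ Nat.card (D k (b:ℕ)) * Nat.card (D k ((b:ℕ)*(b:ℕ))) :=
                card_D_mul k _ _ b.pos (Nat.mul_pos b.pos b.pos)
            _ ≤ Nat.card (D k (b:ℕ)) * (Nat.card (D k (b:ℕ)) * Nat.card (D k (b:ℕ))) := by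
                apply Nat.mul_le_mul_left
                exact card_D_mul k _ _ b.pos b.pos
            _ ≤ Nat.card (D k (b:ℕ)) * Nat.card (D (k*k) (b:ℕ)) := by
                apply Nat.mul_le_mul_left
                exact card_D_mul_card_D k k _ b.pos
            _ ≤ Nat.card (D (k*(k*k)) (b:ℕ)) := card_D_mul_card_D k (k*k) _ b.pos
            _ = Nat.card (D (k*k*k) (b:ℕ)) := by rw [mul_assoc]

def tupEquiv (j n : ℕ) : {f : Fin j → ℕ // (∀ i, 0 < f i) ∧ ∏ i, f i = n} ≃ D j n where
  toFun f := ⟨fun i => ⟨f.1 i, f.2.1 i⟩, f.2.2⟩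
  invFun c := ⟨fun i => (c.1 i : ℕ), ⟨fun i => (c.1 i).pos, c.2⟩⟩
  left_inv f := by apply Subtype.ext; funext i; rfl
  right_inv c := by apply Subtype.ext; funext i; rfl

lemma tauk_eq (j n : ℕ) : tauk j n = Nat.card (D j n) := Nat.card_congr (tupEquiv j n)



lemma pp_rep (p e : ℕ) (hp : 1 ≤ p) (he : 2 ≤ e) : ∃ x y : ℕ, 0 < x ∧ 0 < y ∧ p ^ e = x^2 * y^3 := by
  rcases Nat.even_or_odd e with hev | hod
  · obtain ⟨c, hc⟩ := hev
    exact ⟨p ^ c, 1, pow_pos hp c, one_pos, by rw [one_pow, mul_one, ← pow_mul]; congr 1; omega⟩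
  · obtain ⟨t, ht⟩ := hod
    have hte : 1 ≤ t := by omega
    refine ⟨p ^ (t - 1), p, pow_pos hp _, hp, ?_⟩
    rw [← pow_mul, ← pow_add]
    congr 1
    omega

lemma sf_rep : ∀ n : ℕ, 0 < n → Squarefull n → ∃ a b : ℕ, 0 < a ∧ 0 < b ∧ n = a^2 * b^3 := by
  intro n
  induction n using Nat.strong_induction_on with
  | _ n ih =>
    intro hn hsf
    rcases eq_or_lt_of_le (show 1 ≤ n from hn) with h1 | h2
    · exact ⟨1, 1, one_pos, one_pos, by omega⟩
    · -- n ≥ 2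
      have hn1 : n ≠ 1 := by omega
      have hn0 : n ≠ 0 := by omega
      set p := n.minFac with hp
      have hpp : p.Prime := Nat.minFac_prime hn1
      have hpd : p ∣ n := Nat.minFac_dvd n
      set e := n.factorization p with he
      have he2 : 2 ≤ e := by
        have := hsf p hpp hpd
        exact (Nat.Prime.pow_dvd_iff_le_factorization hpp hn0).mp this
      set m := n / p ^ e with hm
      have hnm : p ^ e * m = n := Nat.ordProj_mul_ordCompl_eq_self n p
      have hmpos : 0 < m := Nat.ordCompl_pos p hn0
      have hpnd : ¬ p ∣ m := Nat.not_dvd_ordCompl hpp hn0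
      have hmlt : m < n := by
        have hpe : 1 < p ^ e := by
          have := hpp.two_le
          calc 1 < p := this
            _ ≤ p ^ e := Nat.le_self_pow (by omega) p
        calc m = m * 1 := by omega
          _ < p ^ e * m := by
              rw [mul_comm m 1]
              exact Nat.mul_lt_mul_of_lt_of_le hpe (le_refl m) hmpos
          _ = n := hnm
      have hmsf : Squarefull m := by
        intro q hq hqm
        have hqn : q ∣ n := hqm.trans ⟨p ^ e, by rw [← hnm]; ring⟩
        have hq2 : q ^ 2 ∣ n := hsf q hq hqn
        have hqp : q ≠ p := by
          rintro rfl
          exact hpnd hqm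
        have hcop : (q ^ 2).Coprime (p ^ e) :=
          Nat.Coprime.pow 2 e ((Nat.coprime_primes hq hpp).mpr hqp)
        rw [← hnm] at hq2
        exact hcop.dvd_of_dvd_mul_left hq2
      obtain ⟨a1, b1, ha1, hb1, hab1⟩ := ih m hmlt hmpos hmsf
      obtain ⟨x, y, hx, hy, hxy⟩ := pp_rep p e hpp.one_lt.le he2
      refine ⟨x * a1, y * b1, Nat.mul_pos hx ha1, Nat.mul_pos hy hb1, ?_⟩
      rw [← hnm, hxy, hab1]
      ring



lemma tsum_pnat_le {u : ℕ+ → ℝ≥0∞} {c : ℝ≥0∞}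
    (h : ∀ n : ℕ, ∑ i ∈ Finset.range n, u (⟨i+1, Nat.succ_pos i⟩) ≤ c) :
    ∑' d, u d ≤ c := by
  rw [ENNReal.tsum_eq_iSup_sum]
  apply iSup_le
  intro s
  set n := s.sup (fun d => (d:ℕ)) with hn
  have hsub : s ⊆ (Finset.range n).image (fun i => (⟨i+1, Nat.succ_pos i⟩ : ℕ+)) := by
    intro d hd
    apply Finset.mem_image.mpr
    refine ⟨(d:ℕ) - 1, ?_, ?_⟩
    · rw [Finset.mem_range]
      have : (d:ℕ) ≤ n := Finset.le_sup hd
      have := d.pos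
      omega
    · apply PNat.coe_injective
      have := d.pos
      show (d:ℕ) - 1 + 1 = (d:ℕ)
      omega
  calc ∑ d ∈ s, u d ≤ ∑ d ∈ (Finset.range n).image (fun i => (⟨i+1, Nat.succ_pos i⟩ : ℕ+)), u d :=
        Finset.sum_le_sum_of_subset hsub
    _ = ∑ i ∈ Finset.range n, u ⟨i+1, Nat.succ_pos i⟩ := by
        apply Finset.sum_image
        intro x _ y _ hxy
        have : x + 1 = y + 1 := congrArg (fun p : ℕ+ => (p:ℕ)) hxy
        omega
    _ ≤ c := h n

lemma rsum_sq' (n : ℕ) (hn : 1 ≤ n) :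
    ∑ i ∈ Finset.range n, 1/(((i:ℝ)+1))^2 ≤ 2 - 1/(n:ℝ) := by
  induction n, hn using Nat.le_induction with
  | base => norm_num
  | succ n hn ih =>
    rw [Finset.sum_range_succ]
    have h1 : (1:ℝ) ≤ (n:ℝ) := by exact_mod_cast hn
    have key : 1/((n:ℝ)+1)^2 ≤ 1/(n:ℝ) - 1/((n:ℝ)+1) := by
      rw [div_sub_div _ _ (by linarith) (by linarith : (n:ℝ)+1 ≠ 0)]
      rw [div_le_div_iff₀ (by positivity) (by positivity)]
      nlinarith
    push_cast
    linarith

lemma rsum_sq (n : ℕ) : ∑ i ∈ Finset.range n, 1/(((i:ℝ)+1))^2 ≤ 2 := by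
  rcases Nat.eq_zero_or_pos n with h0 | h1
  · subst h0; simp
  · have := rsum_sq' n h1
    have : (0:ℝ) < (n:ℝ) := by exact_mod_cast h1
    have h2 := rsum_sq' n h1
    have h3 : (0:ℝ) ≤ 1/(n:ℝ) := by positivity
    linarith

lemma rsum_tail (m : ℕ) (hm : 1 ≤ m) (n : ℕ) :
    ∑ i ∈ Finset.range n, (if m ≤ i then (1/(i:ℝ) - 1/((i:ℝ)+1)) else 0)
      ≤ 1/(m:ℝ) - 1/((max m n : ℕ):ℝ) := by
  induction n with
  | zero =>
    simp only [Finset.range_zero, Finset.sum_empty]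
    rw [max_eq_left (Nat.zero_le m)]
    simp
  | succ n ih =>
    rw [Finset.sum_range_succ]
    by_cases h : m ≤ n
    · rw [if_pos h]
      have hmax1 : max m n = n := max_eq_right h
      have hmax2 : max m (n+1) = n+1 := max_eq_right (by omega)
      rw [hmax1] at ih
      rw [hmax2]
      push_cast
      linarith
    · rw [if_neg h]
      have hmax1 : max m n = m := max_eq_left (by omega)
      have hmax2 : max m (n+1) = m := max_eq_left (by omega)
      rw [hmax1] at ih
      rw [hmax2]
      linarith

lemma rsum_harmonic (m : ℕ) (hm : 1 ≤ m) :
    ∑ i ∈ Finset.range m, 1/((i:ℝ)+1) ≤ 1 + Real.log m := by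
  induction m, hm using Nat.le_induction with
  | base => norm_num
  | succ m hm ih =>
    rw [Finset.sum_range_succ]
    have h1 : (1:ℝ) ≤ (m:ℝ) := by exact_mod_cast hm
    have key : 1/((m:ℝ)+1) ≤ Real.log ((m:ℝ)+1) - Real.log (m:ℝ) := by
      have hlog : Real.log ((m:ℝ)/((m:ℝ)+1)) ≤ (m:ℝ)/((m:ℝ)+1) - 1 :=
        Real.log_le_sub_one_of_pos (by positivity)
      rw [Real.log_div (by linarith) (by linarith : (m:ℝ)+1 ≠ 0)] at hlog
      have heq : (m:ℝ)/((m:ℝ)+1) - 1 = -(1/((m:ℝ)+1)) := by field_simp; ring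
      rw [heq] at hlog
      linarith
    push_cast
    linarith

lemma rsum_sqrt' (n : ℕ) (hn : 1 ≤ n) :
    ∑ i ∈ Finset.range n, 1/(((i:ℝ)+1) * Real.sqrt ((i:ℝ)+1)) ≤ 3 - 2/Real.sqrt (n:ℝ) := by
  induction n, hn using Nat.le_induction with
  | base => norm_num
  | succ n hn ih =>
    rw [Finset.sum_range_succ]
    have h1 : (1:ℝ) ≤ (n:ℝ) := by exact_mod_cast hn
    set x := Real.sqrt (n:ℝ) with hx
    set y := Real.sqrt ((n:ℝ)+1) with hy
    have hx0 : 0 < x := Real.sqrt_pos.mpr (by linarith)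
    have hy0 : 0 < y := Real.sqrt_pos.mpr (by linarith)
    have hx2 : x^2 = (n:ℝ) := Real.sq_sqrt (by linarith)
    have hy2 : y^2 = (n:ℝ)+1 := Real.sq_sqrt (by linarith)
    have hxy : x ≤ y := Real.sqrt_le_sqrt (by linarith)
    have hprod : (y - x) * (y + x) = 1 := by nlinarith
    have hle : x*y*(x+y) ≤ 2*(y^2*y) := by
      nlinarith [mul_le_mul_of_nonneg_right (mul_self_le_mul_self hx0.le hxy) hy0.le,
        mul_le_mul_of_nonneg_right hxy (mul_nonneg hy0.le hy0.le)]
    have key : 1/(((n:ℝ)+1) * y) ≤ 2/x - 2/y := by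
      rw [div_sub_div _ _ (ne_of_gt hx0) (ne_of_gt hy0)]
      have hn2 : (n:ℝ)+1 = y^2 := hy2.symm
      rw [hn2]
      rw [div_le_div_iff₀ (by positivity) (by positivity)]
      have hxyprod : x*y*((y-x)*(y+x)) = x*y := by rw [hprod]; ring
      nlinarith [mul_le_mul_of_nonneg_left hle (sub_nonneg.mpr hxy), hxyprod]
    push_cast
    linarith

lemma rsum_sqrt (n : ℕ) :
    ∑ i ∈ Finset.range n, 1/(((i:ℝ)+1) * Real.sqrt ((i:ℝ)+1)) ≤ 3 := by
  rcases Nat.eq_zero_or_pos n with h0 | h1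
  · subst h0; simp
  · have h2 := rsum_sqrt' n h1
    have h3 : (0:ℝ) ≤ 2/Real.sqrt (n:ℝ) := by positivity
    linarith

-- continues namespace SF10; needs: Tup, phi, phi_cons, phi_pos, tsum_pnat_le, rsum_* lemmas

lemma ite_ofReal (c : Prop) [Decidable c] (x : ℝ) :
    (if c then ENNReal.ofReal x else 0) = ENNReal.ofReal (if c then x else 0) := by
  split <;> simp

lemma pnat_cast_mk (i : ℕ) : (((⟨i+1, Nat.succ_pos i⟩ : ℕ+) : ℕ) : ℝ) = (i:ℝ)+1 := by
  push_cast
  rfl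

lemma S1 : ∑' (d : ℕ+), ENNReal.ofReal (1/((d:ℕ):ℝ)^2) ≤ 2 := by
  apply tsum_pnat_le
  intro n
  have hnn : ∀ i ∈ Finset.range n, (0:ℝ) ≤ 1/((i:ℝ)+1)^2 := by intro i _; positivity
  calc ∑ i ∈ Finset.range n, ENNReal.ofReal (1/(((⟨i+1, Nat.succ_pos i⟩:ℕ+):ℕ):ℝ)^2)
      = ENNReal.ofReal (∑ i ∈ Finset.range n, 1/((i:ℝ)+1)^2) := by
        rw [ENNReal.ofReal_sum_of_nonneg hnn]
        exact Finset.sum_congr rfl (fun i _ => by rw [pnat_cast_mk])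
    _ ≤ ENNReal.ofReal 2 := ENNReal.ofReal_le_ofReal (rsum_sq n)
    _ = 2 := ENNReal.ofReal_ofNat 2

lemma S4 : ∑' (d : ℕ+), ENNReal.ofReal (1/(((d:ℕ):ℝ) * Real.sqrt ((d:ℕ):ℝ))) ≤ 3 := by
  apply tsum_pnat_le
  intro n
  have hnn : ∀ i ∈ Finset.range n, (0:ℝ) ≤ 1/(((i:ℝ)+1) * Real.sqrt ((i:ℝ)+1)) := by
    intro i _; positivity
  calc ∑ i ∈ Finset.range n,
        ENNReal.ofReal (1/((((⟨i+1, Nat.succ_pos i⟩:ℕ+):ℕ):ℝ) * Real.sqrt (((⟨i+1, Nat.succ_pos i⟩:ℕ+):ℕ):ℝ)))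
      = ENNReal.ofReal (∑ i ∈ Finset.range n, 1/(((i:ℝ)+1) * Real.sqrt ((i:ℝ)+1))) := by
        rw [ENNReal.ofReal_sum_of_nonneg hnn]
        exact Finset.sum_congr rfl (fun i _ => by rw [pnat_cast_mk])
    _ ≤ ENNReal.ofReal 3 := ENNReal.ofReal_le_ofReal (rsum_sqrt n)
    _ = 3 := ENNReal.ofReal_ofNat 3

lemma rsum_tail2 (t : ℝ) (ht : 1 ≤ t) (n : ℕ) :
    ∑ i ∈ Finset.range n, (if t < (i:ℝ)+1 then 1/((i:ℝ)+1)^2 else 0) ≤ 2/t := by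
  have ht0 : (0:ℝ) < t := by linarith
  set m := ⌊t⌋₊ with hm
  have hm1 : 1 ≤ m := Nat.le_floor (by exact_mod_cast ht)
  have hmt : t < (m:ℝ) + 1 := Nat.lt_floor_add_one t
  have hmr : (1:ℝ) ≤ (m:ℝ) := by exact_mod_cast hm1
  have step : ∀ i ∈ Finset.range n,
      (if t < (i:ℝ)+1 then 1/((i:ℝ)+1)^2 else 0) ≤ (if m ≤ i then (1/(i:ℝ) - 1/((i:ℝ)+1)) else 0) := by
    intro i _
    by_cases hc : t < (i:ℝ)+1
    · rw [if_pos hc]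
      have hmi : m ≤ i := by
        have h1 : m < i + 1 := (Nat.floor_lt ht0.le).mpr (by push_cast; exact hc)
        omega
      rw [if_pos hmi]
      have hi1 : (1:ℝ) ≤ (i:ℝ) := le_trans hmr (by exact_mod_cast hmi)
      rw [div_sub_div _ _ (by linarith) (by linarith : (i:ℝ)+1 ≠ 0)]
      rw [div_le_div_iff₀ (by positivity) (by positivity)]
      nlinarith
    · rw [if_neg hc]
      split
      · rename_i hmi
        have hi1 : (1:ℝ) ≤ (i:ℝ) := le_trans hmr (by exact_mod_cast hmi)
        have : 1/((i:ℝ)+1) ≤ 1/(i:ℝ) := by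
          apply div_le_div_of_nonneg_left one_pos.le (by linarith) (by linarith)
        linarith
      · exact le_refl 0
  calc ∑ i ∈ Finset.range n, (if t < (i:ℝ)+1 then 1/((i:ℝ)+1)^2 else 0)
      ≤ ∑ i ∈ Finset.range n, (if m ≤ i then (1/(i:ℝ) - 1/((i:ℝ)+1)) else 0) :=
        Finset.sum_le_sum step
    _ ≤ 1/(m:ℝ) - 1/((max m n : ℕ):ℝ) := rsum_tail m hm1 n
    _ ≤ 1/(m:ℝ) := by
        have h1 : (1:ℝ) ≤ ((max m n : ℕ):ℝ) := by
          have : 1 ≤ max m n := le_trans hm1 (le_max_left m n)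
          exact_mod_cast this
        have : (0:ℝ) ≤ 1/((max m n : ℕ):ℝ) := by positivity
        linarith
    _ ≤ 2/t := by
        rw [div_le_div_iff₀ (by linarith) ht0]
        linarith
lemma rsum_harm2 (t : ℝ) (ht : 1 ≤ t) (n : ℕ) :
    ∑ i ∈ Finset.range n, (if (i:ℝ)+1 ≤ t then 1/((i:ℝ)+1) else 0) ≤ 1 + Real.log t := by
  have ht0 : (0:ℝ) < t := by linarith
  set m := ⌊t⌋₊ with hm
  have hm1 : 1 ≤ m := Nat.le_floor (by exact_mod_cast ht)
  have step : ∀ i ∈ Finset.range n,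
      (if (i:ℝ)+1 ≤ t then 1/((i:ℝ)+1) else 0) ≤ (if i ∈ Finset.range m then 1/((i:ℝ)+1) else 0) := by
    intro i _
    by_cases hc : (i:ℝ)+1 ≤ t
    · rw [if_pos hc]
      have : i + 1 ≤ m := Nat.le_floor (by push_cast; exact hc)
      rw [if_pos (Finset.mem_range.mpr (by omega))]
    · rw [if_neg hc]
      split
      · positivity
      · exact le_refl 0
  calc ∑ i ∈ Finset.range n, (if (i:ℝ)+1 ≤ t then 1/((i:ℝ)+1) else 0)
      ≤ ∑ i ∈ Finset.range n, (if i ∈ Finset.range m then 1/((i:ℝ)+1) else 0) :=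
        Finset.sum_le_sum step
    _ = ∑ i ∈ Finset.range n ∩ Finset.range m, 1/((i:ℝ)+1) := Finset.sum_ite_mem _ _ _
    _ ≤ ∑ i ∈ Finset.range m, 1/((i:ℝ)+1) := by
        apply Finset.sum_le_sum_of_subset_of_nonneg (Finset.inter_subset_right)
        intro i _ _; positivity
    _ ≤ 1 + Real.log m := rsum_harmonic m hm1
    _ ≤ 1 + Real.log t := by
        have : Real.log (m:ℝ) ≤ Real.log t :=
          Real.log_le_log (by exact_mod_cast hm1) (Nat.floor_le ht0.le)
        linarith

lemma S2 (t : ℝ) (ht : 1 ≤ t) :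
    ∑' (d : ℕ+), (if t < ((d:ℕ):ℝ) then ENNReal.ofReal (1/((d:ℕ):ℝ)^2) else 0)
      ≤ ENNReal.ofReal (2/t) := by
  apply tsum_pnat_le
  intro n
  calc ∑ i ∈ Finset.range n,
        (if t < (((⟨i+1, Nat.succ_pos i⟩:ℕ+):ℕ):ℝ) then ENNReal.ofReal (1/(((⟨i+1, Nat.succ_pos i⟩:ℕ+):ℕ):ℝ)^2) else 0)
      = ENNReal.ofReal (∑ i ∈ Finset.range n, (if t < (i:ℝ)+1 then 1/((i:ℝ)+1)^2 else 0)) := by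
        rw [ENNReal.ofReal_sum_of_nonneg (by intro i _; split <;> positivity)]
        refine Finset.sum_congr rfl (fun i _ => ?_)
        rw [ite_ofReal, pnat_cast_mk]
    _ ≤ ENNReal.ofReal (2/t) := ENNReal.ofReal_le_ofReal (rsum_tail2 t ht n)

lemma S3 (t : ℝ) (ht : 1 ≤ t) :
    ∑' (d : ℕ+), (if ((d:ℕ):ℝ) ≤ t then ENNReal.ofReal (1/((d:ℕ):ℝ)) else 0)
      ≤ ENNReal.ofReal (1 + Real.log t) := by
  apply tsum_pnat_le
  intro n
  calc ∑ i ∈ Finset.range n,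
        (if (((⟨i+1, Nat.succ_pos i⟩:ℕ+):ℕ):ℝ) ≤ t then ENNReal.ofReal (1/(((⟨i+1, Nat.succ_pos i⟩:ℕ+):ℕ):ℝ)) else 0)
      = ENNReal.ofReal (∑ i ∈ Finset.range n, (if (i:ℝ)+1 ≤ t then 1/((i:ℝ)+1) else 0)) := by
        rw [ENNReal.ofReal_sum_of_nonneg (by intro i _; split <;> positivity)]
        refine Finset.sum_congr rfl (fun i _ => ?_)
        rw [ite_ofReal, pnat_cast_mk]
    _ ≤ ENNReal.ofReal (1 + Real.log t) := ENNReal.ofReal_le_ofReal (rsum_harm2 t ht n)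

-- ===== tuple sums =====

lemma tsum_tup_succ {j : ℕ} (g : Tup (j+1) → ℝ≥0∞) :
    ∑' c : Tup (j+1), g c = ∑' (d : ℕ+) (c : Tup j), g (Fin.cons d c) := by
  rw [← Equiv.tsum_eq (Fin.consEquiv (fun _ : Fin (j+1) => ℕ+)) g]
  rw [← ENNReal.tsum_prod (f := fun d c => g (Fin.cons d c))]
  apply tsum_congr
  rintro ⟨d, c⟩
  rfl

lemma tsum_tup_zero (g : Tup 0 → ℝ≥0∞) : ∑' c : Tup 0, g c = g default :=
  tsum_eq_single default (fun b hb => absurd (Subsingleton.elim b default) hb)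

lemma phi_default : phi (default : Tup 0) = 1 := by simp [phi]

noncomputable def Zsum (j : ℕ) : ℝ≥0∞ :=
  ∑' c : Tup j, ENNReal.ofReal (1/((phi c : ℕ):ℝ)^2)

noncomputable def Fsum (j : ℕ) (t : ℝ) : ℝ≥0∞ :=
  ∑' c : Tup j, if t < ((phi c : ℕ):ℝ) then ENNReal.ofReal (1/((phi c : ℕ):ℝ)^2) else 0

noncomputable def Bsum (j : ℕ) : ℝ≥0∞ :=
  ∑' c : Tup j, ENNReal.ofReal (1/(((phi c : ℕ):ℝ) * Real.sqrt ((phi c : ℕ):ℝ)))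

lemma phi_cons_real (d : ℕ+) (c : Tup j) :
    ((phi (Fin.cons d c) : ℕ):ℝ) = ((d:ℕ):ℝ) * ((phi c : ℕ):ℝ) := by
  rw [phi_cons]; push_cast; ring

lemma Zsum_le (j : ℕ) : Zsum j ≤ 2^j := by
  induction j with
  | zero =>
    rw [Zsum, tsum_tup_zero, phi_default]
    norm_num
  | succ j ih =>
    rw [Zsum, tsum_tup_succ]
    have hstep : ∀ (d : ℕ+) (c : Tup j),
        ENNReal.ofReal (1/((phi (Fin.cons d c) : ℕ):ℝ)^2)
          = ENNReal.ofReal (1/((d:ℕ):ℝ)^2) * ENNReal.ofReal (1/((phi c : ℕ):ℝ)^2) := by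
      intro d c
      rw [← ENNReal.ofReal_mul (by positivity)]
      congr 1
      rw [phi_cons_real]
      have h1 : (0:ℝ) < ((d:ℕ):ℝ) := by exact_mod_cast d.pos
      have h2 : (0:ℝ) < ((phi c : ℕ):ℝ) := by exact_mod_cast phi_pos c
      field_simp
    calc (∑' (d : ℕ+) (c : Tup j), ENNReal.ofReal (1/((phi (Fin.cons d c) : ℕ):ℝ)^2))
        = ∑' (d : ℕ+), ENNReal.ofReal (1/((d:ℕ):ℝ)^2) * Zsum j := by
          apply tsum_congr; intro d
          rw [Zsum, ← ENNReal.tsum_mul_left]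
          exact tsum_congr (fun c => hstep d c)
      _ = (∑' (d : ℕ+), ENNReal.ofReal (1/((d:ℕ):ℝ)^2)) * Zsum j := ENNReal.tsum_mul_right
      _ ≤ 2 * 2^j := mul_le_mul' S1 ih
      _ = 2^(j+1) := by rw [pow_succ]; ring

lemma Bsum_le (j : ℕ) : Bsum j ≤ 3^j := by
  induction j with
  | zero =>
    rw [Bsum, tsum_tup_zero, phi_default]
    norm_num
  | succ j ih =>
    rw [Bsum, tsum_tup_succ]
    have hstep : ∀ (d : ℕ+) (c : Tup j),
        ENNReal.ofReal (1/(((phi (Fin.cons d c) : ℕ):ℝ) * Real.sqrt ((phi (Fin.cons d c) : ℕ):ℝ)))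
          = ENNReal.ofReal (1/(((d:ℕ):ℝ) * Real.sqrt ((d:ℕ):ℝ)))
            * ENNReal.ofReal (1/(((phi c : ℕ):ℝ) * Real.sqrt ((phi c : ℕ):ℝ))) := by
      intro d c
      rw [← ENNReal.ofReal_mul (by positivity)]
      congr 1
      rw [phi_cons_real]
      have h1 : (0:ℝ) < ((d:ℕ):ℝ) := by exact_mod_cast d.pos
      have h2 : (0:ℝ) < ((phi c : ℕ):ℝ) := by exact_mod_cast phi_pos c
      rw [Real.sqrt_mul h1.le]
      have hs1 : (0:ℝ) < Real.sqrt ((d:ℕ):ℝ) := Real.sqrt_pos.mpr h1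
      have hs2 : (0:ℝ) < Real.sqrt ((phi c : ℕ):ℝ) := Real.sqrt_pos.mpr h2
      field_simp
    calc (∑' (d : ℕ+) (c : Tup j),
          ENNReal.ofReal (1/(((phi (Fin.cons d c) : ℕ):ℝ) * Real.sqrt ((phi (Fin.cons d c) : ℕ):ℝ))))
        = ∑' (d : ℕ+), ENNReal.ofReal (1/(((d:ℕ):ℝ) * Real.sqrt ((d:ℕ):ℝ))) * Bsum j := by
          apply tsum_congr; intro d
          rw [Bsum, ← ENNReal.tsum_mul_left]
          exact tsum_congr (fun c => hstep d c)
      _ = (∑' (d : ℕ+), ENNReal.ofReal (1/(((d:ℕ):ℝ) * Real.sqrt ((d:ℕ):ℝ)))) * Bsum j :=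
          ENNReal.tsum_mul_right
      _ ≤ 3 * 3^j := mul_le_mul' S4 ih
      _ = 3^(j+1) := by rw [pow_succ]; ring

lemma Fsum_zero (t : ℝ) : Fsum 0 t = if t < 1 then 1 else 0 := by
  rw [Fsum, tsum_tup_zero, phi_default]
  norm_num

lemma Fsum_le_Zsum (j : ℕ) (t : ℝ) : Fsum j t ≤ Zsum j := by
  apply ENNReal.tsum_le_tsum
  intro c
  split
  · exact le_refl _
  · exact zero_le

lemma Fsum_succ (j : ℕ) (t : ℝ) (ht : 0 < t) :
    Fsum (j+1) t = ∑' (d : ℕ+), ENNReal.ofReal (1/((d:ℕ):ℝ)^2) * Fsum j (t / ((d:ℕ):ℝ)) := by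
  rw [Fsum, tsum_tup_succ]
  apply tsum_congr; intro d
  have hd0 : (0:ℝ) < ((d:ℕ):ℝ) := by exact_mod_cast d.pos
  rw [Fsum, ← ENNReal.tsum_mul_left]
  apply tsum_congr; intro c
  have hcond : (t < ((phi (Fin.cons d c) : ℕ):ℝ)) ↔ (t / ((d:ℕ):ℝ) < ((phi c : ℕ):ℝ)) := by
    rw [phi_cons_real, div_lt_iff₀ hd0, mul_comm]
  have h2 : (0:ℝ) < ((phi c : ℕ):ℝ) := by exact_mod_cast phi_pos c
  by_cases hc : t / ((d:ℕ):ℝ) < ((phi c : ℕ):ℝ)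
  · rw [if_pos (hcond.mpr hc), if_pos hc]
    rw [← ENNReal.ofReal_mul (by positivity)]
    congr 1
    rw [phi_cons_real]
    field_simp
  · rw [if_neg (fun h => hc (hcond.mp h)), if_neg hc, mul_zero]

lemma Fsum_le : ∀ j : ℕ, 1 ≤ j → ∀ t : ℝ, 1 ≤ t →
    Fsum j t ≤ ENNReal.ofReal (4^j * (1 + Real.log t)^(j-1) / t) := by
  intro j hj
  induction j, hj using Nat.le_induction with
  | base =>
    intro t ht
    have ht0 : (0:ℝ) < t := by linarith
    rw [Fsum_succ 0 t ht0]
    have hstep : ∀ d : ℕ+, ENNReal.ofReal (1/((d:ℕ):ℝ)^2) * Fsum 0 (t/((d:ℕ):ℝ))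
        = (if t < ((d:ℕ):ℝ) then ENNReal.ofReal (1/((d:ℕ):ℝ)^2) else 0) := by
      intro d
      have hd0 : (0:ℝ) < ((d:ℕ):ℝ) := by exact_mod_cast d.pos
      rw [Fsum_zero]
      by_cases hc : t < ((d:ℕ):ℝ)
      · rw [if_pos (by rwa [div_lt_one hd0]), if_pos hc, mul_one]
      · rw [if_neg (by rw [div_lt_one hd0]; exact hc), if_neg hc, mul_zero]
    rw [tsum_congr hstep]
    refine le_trans (S2 t ht) (ENNReal.ofReal_le_ofReal ?_)
    simp only [pow_one, Nat.sub_self, pow_zero, mul_one]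
    rw [div_le_div_iff₀ ht0 ht0]
    nlinarith
  | succ j hj ih =>
    intro t ht
    have ht0 : (0:ℝ) < t := by linarith
    have hlogt : 0 ≤ Real.log t := Real.log_nonneg ht
    set X : ℝ := 4^j * (1 + Real.log t)^(j-1) / t with hX
    have hXnn : 0 ≤ X := by positivity
    have key : ∀ d : ℕ+, ENNReal.ofReal (1/((d:ℕ):ℝ)^2) * Fsum j (t/((d:ℕ):ℝ))
        ≤ (if ((d:ℕ):ℝ) ≤ t then ENNReal.ofReal (1/((d:ℕ):ℝ)) else 0) * ENNReal.ofReal X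
          + (2:ℝ≥0∞)^j * (if t < ((d:ℕ):ℝ) then ENNReal.ofReal (1/((d:ℕ):ℝ)^2) else 0) := by
      intro d
      have hd0 : (0:ℝ) < ((d:ℕ):ℝ) := by exact_mod_cast d.pos
      have hd1 : (1:ℝ) ≤ ((d:ℕ):ℝ) := by exact_mod_cast d.one_le
      by_cases hc : ((d:ℕ):ℝ) ≤ t
      · have htd : 1 ≤ t/((d:ℕ):ℝ) := (one_le_div hd0).mpr hc
        have h1 := ih (t/((d:ℕ):ℝ)) htd
        have h2 : 4^j * (1 + Real.log (t/((d:ℕ):ℝ)))^(j-1) / (t/((d:ℕ):ℝ)) ≤ ((d:ℕ):ℝ) * X := by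
          have hlog1 : 0 ≤ Real.log (t/((d:ℕ):ℝ)) := Real.log_nonneg htd
          have hlog2 : Real.log (t/((d:ℕ):ℝ)) ≤ Real.log t := by
            apply Real.log_le_log (by linarith)
            rw [div_le_iff₀ hd0]
            nlinarith
          calc 4^j * (1 + Real.log (t/((d:ℕ):ℝ)))^(j-1) / (t/((d:ℕ):ℝ))
              = 4^j * (1 + Real.log (t/((d:ℕ):ℝ)))^(j-1) * ((d:ℕ):ℝ) / t := by
                rw [div_div_eq_mul_div]
            _ ≤ 4^j * (1 + Real.log t)^(j-1) * ((d:ℕ):ℝ) / t := by gcongr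
            _ = ((d:ℕ):ℝ) * X := by rw [hX]; ring
        calc ENNReal.ofReal (1/((d:ℕ):ℝ)^2) * Fsum j (t/((d:ℕ):ℝ))
            ≤ ENNReal.ofReal (1/((d:ℕ):ℝ)^2) * ENNReal.ofReal (((d:ℕ):ℝ) * X) :=
              mul_le_mul' (le_refl _) (h1.trans (ENNReal.ofReal_le_ofReal h2))
          _ = ENNReal.ofReal (1/((d:ℕ):ℝ)) * ENNReal.ofReal X := by
              rw [← ENNReal.ofReal_mul (by positivity), ← ENNReal.ofReal_mul (by positivity)]
              congr 1
              field_simp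
          _ = (if ((d:ℕ):ℝ) ≤ t then ENNReal.ofReal (1/((d:ℕ):ℝ)) else 0) * ENNReal.ofReal X := by
              rw [if_pos hc]
          _ ≤ _ := self_le_add_right _ _
      · push_neg at hc
        have h1 : Fsum j (t/((d:ℕ):ℝ)) ≤ 2^j := (Fsum_le_Zsum j _).trans (Zsum_le j)
        calc ENNReal.ofReal (1/((d:ℕ):ℝ)^2) * Fsum j (t/((d:ℕ):ℝ))
            ≤ ENNReal.ofReal (1/((d:ℕ):ℝ)^2) * 2^j := mul_le_mul' (le_refl _) h1
          _ = (2:ℝ≥0∞)^j * (if t < ((d:ℕ):ℝ) then ENNReal.ofReal (1/((d:ℕ):ℝ)^2) else 0) := by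
              rw [if_pos hc, mul_comm]
          _ ≤ _ := self_le_add_left _ _
    have h2pow : (2:ℝ≥0∞)^j = ENNReal.ofReal ((2:ℝ)^j) := by
      rw [ENNReal.ofReal_pow (by norm_num), ENNReal.ofReal_ofNat]
    calc Fsum (j+1) t
        = ∑' (d : ℕ+), ENNReal.ofReal (1/((d:ℕ):ℝ)^2) * Fsum j (t/((d:ℕ):ℝ)) := Fsum_succ j t ht0
      _ ≤ ∑' (d : ℕ+), ((if ((d:ℕ):ℝ) ≤ t then ENNReal.ofReal (1/((d:ℕ):ℝ)) else 0) * ENNReal.ofReal X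
            + (2:ℝ≥0∞)^j * (if t < ((d:ℕ):ℝ) then ENNReal.ofReal (1/((d:ℕ):ℝ)^2) else 0)) :=
          ENNReal.tsum_le_tsum key
      _ = (∑' (d : ℕ+), (if ((d:ℕ):ℝ) ≤ t then ENNReal.ofReal (1/((d:ℕ):ℝ)) else 0)) * ENNReal.ofReal X
            + (2:ℝ≥0∞)^j * ∑' (d : ℕ+), (if t < ((d:ℕ):ℝ) then ENNReal.ofReal (1/((d:ℕ):ℝ)^2) else 0) := by
          rw [ENNReal.tsum_add, ENNReal.tsum_mul_right, ENNReal.tsum_mul_left]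
      _ ≤ ENNReal.ofReal (1 + Real.log t) * ENNReal.ofReal X
            + ENNReal.ofReal ((2:ℝ)^j) * ENNReal.ofReal (2/t) := by
          rw [← h2pow]
          exact add_le_add (mul_le_mul' (S3 t ht) (le_refl _))
            (mul_le_mul' (le_refl _) (S2 t ht))
      _ = ENNReal.ofReal ((1 + Real.log t) * X + (2:ℝ)^j * (2/t)) := by
          rw [← ENNReal.ofReal_mul (by linarith), ← ENNReal.ofReal_mul (by positivity),
            ← ENNReal.ofReal_add (by positivity) (by positivity)]
      _ ≤ ENNReal.ofReal (4^(j+1) * (1 + Real.log t)^((j+1)-1) / t) := by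
          apply ENNReal.ofReal_le_ofReal
          simp only [Nat.add_sub_cancel]
          have hjj : j - 1 + 1 = j := by omega
          have hfirst : (1 + Real.log t) * X = 4^j * (1 + Real.log t)^j / t := by
            have hps : (1 + Real.log t)^(j-1) * (1 + Real.log t) = (1 + Real.log t)^j := by
              rw [← pow_succ, hjj]
            calc (1 + Real.log t) * X
                = 4^j * ((1 + Real.log t)^(j-1) * (1 + Real.log t)) / t := by rw [hX]; ring
              _ = 4^j * (1 + Real.log t)^j / t := by rw [hps]
          rw [hfirst]
          have hY1 : (1:ℝ) ≤ (1 + Real.log t)^j := one_le_pow₀ (by linarith)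
          have h24 : (2:ℝ)^j ≤ 4^j := pow_le_pow_left₀ (by norm_num) (by norm_num) j
          have h4pos : (0:ℝ) < 4^j := by positivity
          rw [show (2:ℝ)^j * (2/t) = ((2:ℝ)^j * 2)/t from by ring, ← add_div]
          have h4succ : (4:ℝ)^(j+1) = 4^j * 4 := pow_succ 4 j
          gcongr
          nlinarith [mul_le_mul_of_nonneg_left hY1 h4pos.le, h24]

end SF10

open SF10

set_option maxHeartbeats 1000000

/-- The sum over square-full integers `n > N` of `τ_k(n)/n` is
`O((log N)^(k²+k³−2) / N^{1/2})`, with implied constant depending only on `k`. -/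
theorem stmt_10 (k : ℕ) (hk : 0 < k) :
    ∃ C : ℝ, 0 < C ∧ ∀ N : ℕ, 2 ≤ N →
      (∑' n : ℕ, if N < n ∧ Squarefull n then (tauk k n : ℝ) / n else 0) ≤
        C * (Real.log N) ^ (k ^ 2 + k ^ 3 - 2) / Real.sqrt N := by
  classical
  have hl2 : 0 < Real.log 2 := Real.log_pos (by norm_num)
  set j2 := k*k with hj2
  set j3 := k*k*k with hj3
  have hj21 : 1 ≤ j2 := Nat.one_le_iff_ne_zero.mpr (Nat.mul_ne_zero hk.ne' hk.ne')
  have hj31 : 1 ≤ j3 :=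
    Nat.one_le_iff_ne_zero.mpr (Nat.mul_ne_zero (Nat.mul_ne_zero hk.ne' hk.ne') hk.ne')
  set K1 : ℝ := 4^j2 + 2^j2 with hK1def
  have hK1pos : (0:ℝ) < K1 := by positivity
  set C : ℝ := K1 * 3^j3 * (1 + 1/Real.log 2)^(j2-1) * (1/Real.log 2)^(j3-1) with hCdef
  have hCpos : 0 < C := by positivity
  refine ⟨C, hCpos, ?_⟩
  intro N hN
  have hN1 : (1:ℝ) ≤ (N:ℝ) := by exact_mod_cast le_trans one_le_two hN
  have hNR2 : (2:ℝ) ≤ (N:ℝ) := by exact_mod_cast hN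
  have hlogN : 0 ≤ Real.log N := Real.log_nonneg hN1
  have hsN : 0 < Real.sqrt N := Real.sqrt_pos.mpr (by linarith)
  have hsNN : Real.sqrt N ≤ (N:ℝ) := by
    have h1 : (1:ℝ) ≤ Real.sqrt N := Real.one_le_sqrt.mpr hN1
    nlinarith [Real.mul_self_sqrt (by linarith : (0:ℝ) ≤ (N:ℝ))]
  set E := k^2 + k^3 - 2 with hE
  set RHS : ℝ := C * (Real.log N)^E / Real.sqrt N with hRHS
  have hRHSnn : 0 ≤ RHS := by positivity
  set term : ℕ → ℝ := fun n => if N < n ∧ Squarefull n then (tauk k n : ℝ) / n else 0 with hterm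
  have htermnn : ∀ n, 0 ≤ term n := by
    intro n; rw [hterm]; dsimp only; split
    · positivity
    · exact le_refl 0
  have hrep : ∀ n : ℕ, (0 < n ∧ Squarefull n) → ∃ p : ℕ+ × ℕ+, n = ((p.1:ℕ))^2 * ((p.2:ℕ))^3 := by
    rintro n ⟨hn, hs⟩
    obtain ⟨a, b, ha, hb, h⟩ := sf_rep n hn hs
    exact ⟨(⟨a, ha⟩, ⟨b, hb⟩), h⟩
  set AB : ℕ → ℕ+ × ℕ+ :=
    fun n => if h : (0 < n ∧ Squarefull n) then Classical.choose (hrep n h) else (1,1) with hABdef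
  have hAB : ∀ n (h : 0 < n ∧ Squarefull n), n = (((AB n).1:ℕ))^2 * (((AB n).2:ℕ))^3 := by
    intro n h
    rw [hABdef]; dsimp only; rw [dif_pos h]
    exact Classical.choose_spec (hrep n h)
  set w : Tup j2 × Tup j3 → ℝ≥0∞ := fun q =>
    ENNReal.ofReal (1/((phi q.1 : ℕ):ℝ)^2) * ENNReal.ofReal (1/((phi q.2 : ℕ):ℝ)^3) with hw
  set f : ℕ → Tup j2 × Tup j3 → ℝ≥0∞ := fun n q =>
    if (N < n ∧ Squarefull n ∧ phi q.1 = ((AB n).1:ℕ) ∧ phi q.2 = ((AB n).2:ℕ)) then w q else 0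
    with hf
  -- Step 1
  have step1 : ∀ n : ℕ, ENNReal.ofReal (term n) ≤ ∑' q, f n q := by
    intro n
    by_cases hc : N < n ∧ Squarefull n
    case neg =>
      rw [hterm]; dsimp only; rw [if_neg hc]; simp
    case pos =>
      obtain ⟨hNn, hsf⟩ := hc
      have hn0 : 0 < n := by omega
      set a := (AB n).1 with ha
      set b := (AB n).2 with hb
      have hab : n = ((a:ℕ))^2 * ((b:ℕ))^3 := hAB n ⟨hn0, hsf⟩
      haveI hfin1 : Finite (D j2 (a:ℕ)) := D_finite a.pos
      haveI hfin2 : Finite (D j3 (b:ℕ)) := D_finite b.pos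
      set S : Set (Tup j2 × Tup j3) := {q | phi q.1 = (a:ℕ) ∧ phi q.2 = (b:ℕ)} with hS
      have hfeq : ∀ q, f n q = S.indicator w q := by
        intro q
        rw [hf]; dsimp only
        by_cases hq : phi q.1 = (a:ℕ) ∧ phi q.2 = (b:ℕ)
        · rw [if_pos ⟨hNn, hsf, hq.1, hq.2⟩, Set.indicator_of_mem (by exact hq) w]
        · rw [if_neg (by tauto), Set.indicator_of_notMem (by exact hq) w]
      have hSeq : (∑' q, f n q) = ∑' (s : ↥S), w s := by
        rw [tsum_congr hfeq, ← tsum_subtype S w]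
      have hequiv : ↥S ≃ (D j2 (a:ℕ)) × (D j3 (b:ℕ)) :=
        { toFun := fun s => (⟨s.1.1, s.2.1⟩, ⟨s.1.2, s.2.2⟩),
          invFun := fun p => ⟨(p.1.1, p.2.1), ⟨p.1.2, p.2.2⟩⟩,
          left_inv := fun s => rfl,
          right_inv := fun p => rfl }
      haveI : Finite ↥S := Finite.of_equiv _ hequiv.symm
      haveI := Fintype.ofFinite ↥S
      have hcardS : Nat.card ↥S = Nat.card (D j2 (a:ℕ)) * Nat.card (D j3 (b:ℕ)) := by
        rw [Nat.card_congr hequiv, Nat.card_prod]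
      have hwconst : ∀ s : ↥S, w s.1 = ENNReal.ofReal (1/(n:ℝ)) := by
        intro s
        rw [hw]; dsimp only
        rw [s.2.1, s.2.2]
        rw [← ENNReal.ofReal_mul (by positivity)]
        congr 1
        have hnr : (n:ℝ) = ((a:ℕ):ℝ)^2 * ((b:ℕ):ℝ)^3 := by rw [hab]; push_cast; ring
        have h1 : (0:ℝ) < ((a:ℕ):ℝ) := by exact_mod_cast a.pos
        have h2 : (0:ℝ) < ((b:ℕ):ℝ) := by exact_mod_cast b.pos
        rw [hnr]
        field_simp
      have hsum : (∑' (s : ↥S), w s.1) = (Nat.card ↥S : ℝ≥0∞) * ENNReal.ofReal (1/(n:ℝ)) := by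
        rw [tsum_congr hwconst, tsum_fintype, Finset.sum_const, Nat.card_eq_fintype_card,
          Finset.card_univ, nsmul_eq_mul]
      have htau : tauk k n ≤ Nat.card ↥S := by
        rw [hcardS, tauk_eq, hab]
        exact tau_chain k a b
      rw [hterm]; dsimp only; rw [if_pos ⟨hNn, hsf⟩]
      have hofreal : ENNReal.ofReal ((tauk k n : ℝ)/n)
          = (tauk k n : ℝ≥0∞) * ENNReal.ofReal (1/(n:ℝ)) := by
        rw [show (tauk k n : ℝ)/n = (tauk k n : ℝ) * (1/(n:ℝ)) from by ring]
        rw [ENNReal.ofReal_mul (by positivity), ENNReal.ofReal_natCast]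
      rw [hofreal, hSeq, hsum]
      exact mul_le_mul' (by exact_mod_cast Nat.cast_le.mpr htau) (le_refl _)
  -- Step 2
  have step2 : ∀ q : Tup j2 × Tup j3,
      (∑' n : ℕ, f n q) ≤ (if N < (phi q.1)^2 * (phi q.2)^3 then w q else 0) := by
    intro q
    set n₀ := (phi q.1)^2 * (phi q.2)^3 with hn₀
    have hzero : ∀ n : ℕ, n ≠ n₀ → f n q = 0 := by
      intro n hne
      rw [hf]; dsimp only
      rw [if_neg]
      rintro ⟨hNn, hsf, h1, h2⟩
      apply hne
      have hthis := hAB n ⟨by omega, hsf⟩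
      rw [← h1, ← h2] at hthis
      exact hthis
    rw [tsum_eq_single n₀ hzero]
    rw [hf]; dsimp only
    by_cases hcc : (N < n₀ ∧ Squarefull n₀ ∧ phi q.1 = ((AB n₀).1:ℕ) ∧ phi q.2 = ((AB n₀).2:ℕ))
    · rw [if_pos hcc, if_pos hcc.1]
    · rw [if_neg hcc]
      exact zero_le
  -- Step 3
  have step3 : (∑' q : Tup j2 × Tup j3, if N < (phi q.1)^2 * (phi q.2)^3 then w q else 0)
      ≤ ENNReal.ofReal (K1 * (1 + Real.log N)^(j2-1) / Real.sqrt N) * 3^j3 := by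
    set c0 : ℝ := K1 * (1 + Real.log N)^(j2-1) / Real.sqrt N with hc0
    have hc0nn : 0 ≤ c0 := by positivity
    have hsqrtb : ∀ b : ℕ, 1 ≤ b → Real.sqrt (((b:ℝ))^3) = (b:ℝ) * Real.sqrt (b:ℝ) := by
      intro b hb
      have hbr0 : (0:ℝ) < (b:ℝ) := by exact_mod_cast hb
      rw [show ((b:ℝ))^3 = ((b:ℝ))^2 * (b:ℝ) from by ring,
        Real.sqrt_mul (by positivity), Real.sqrt_sq hbr0.le]
    have inner : ∀ e : Tup j3, (∑' c : Tup j2, if N < (phi c)^2 * (phi e)^3 then w (c, e) else 0)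
        ≤ ENNReal.ofReal c0
          * ENNReal.ofReal (1/(((phi e : ℕ):ℝ) * Real.sqrt ((phi e : ℕ):ℝ))) := by
      intro e
      set b := phi e with hbdef
      have hb1 : 1 ≤ b := phi_pos e
      have hbr : (1:ℝ) ≤ (b:ℝ) := by exact_mod_cast hb1
      have hbr0 : (0:ℝ) < (b:ℝ) := by linarith
      have hsb : (0:ℝ) < Real.sqrt (b:ℝ) := Real.sqrt_pos.mpr hbr0
      have hsplit : ∀ c : Tup j2, (if N < (phi c)^2 * b^3 then w (c, e) else 0)
          = (if N < (phi c)^2 * b^3 then ENNReal.ofReal (1/((phi c : ℕ):ℝ)^2) else 0)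
            * ENNReal.ofReal (1/((b:ℝ))^3) := by
        intro c
        rw [hw]; dsimp only
        split
        · rfl
        · rw [zero_mul]
      have hkey : (∑' c : Tup j2, if N < (phi c)^2 * b^3
            then ENNReal.ofReal (1/((phi c : ℕ):ℝ)^2) else 0)
          ≤ ENNReal.ofReal (c0 * ((b:ℝ) * Real.sqrt (b:ℝ))) := by
        by_cases hbN : b^3 ≤ N
        · set t : ℝ := Real.sqrt ((N:ℝ)/((b:ℝ))^3) with htdef
          have hbN' : ((b:ℝ))^3 ≤ (N:ℝ) := by exact_mod_cast hbN
          have ht1 : 1 ≤ t := Real.one_le_sqrt.mpr ((one_le_div (by positivity)).mpr hbN')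
          have ht0 : 0 < t := by linarith
          have hpt : ∀ c : Tup j2,
              (if N < (phi c)^2 * b^3 then ENNReal.ofReal (1/((phi c : ℕ):ℝ)^2) else 0)
              ≤ (if t < ((phi c : ℕ):ℝ) then ENNReal.ofReal (1/((phi c : ℕ):ℝ)^2) else 0) := by
            intro c
            by_cases hcc : N < (phi c)^2 * b^3
            · rw [if_pos hcc, if_pos ?_]
              have hcast : (N:ℝ) < ((phi c : ℕ):ℝ)^2 * ((b:ℝ))^3 := by exact_mod_cast hcc
              have h2 : (N:ℝ)/((b:ℝ))^3 < ((phi c : ℕ):ℝ)^2 := by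
                rw [div_lt_iff₀ (by positivity)]; linarith
              have h3 := Real.sqrt_lt_sqrt (by positivity) h2
              rwa [Real.sqrt_sq (by positivity : (0:ℝ) ≤ ((phi c : ℕ):ℝ))] at h3
            · rw [if_neg hcc]; exact zero_le
          have h1 : (∑' c : Tup j2, if N < (phi c)^2 * b^3
                then ENNReal.ofReal (1/((phi c : ℕ):ℝ)^2) else 0) ≤ Fsum j2 t := by
            rw [Fsum]
            exact ENNReal.tsum_le_tsum hpt
          refine h1.trans ((Fsum_le j2 hj21 t ht1).trans (ENNReal.ofReal_le_ofReal ?_))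
          have htinv : 1/t = ((b:ℝ) * Real.sqrt (b:ℝ))/Real.sqrt N := by
            rw [htdef, Real.sqrt_div (Nat.cast_nonneg N), one_div_div, hsqrtb b hb1]
          have hlt : Real.log t ≤ Real.log N := by
            apply Real.log_le_log ht0
            calc t ≤ Real.sqrt N := by
                  rw [htdef]
                  apply Real.sqrt_le_sqrt
                  exact div_le_self (by linarith) (one_le_pow₀ hbr)
              _ ≤ (N:ℝ) := hsNN
          have hlogt : 0 ≤ Real.log t := Real.log_nonneg ht1
          have hpw : (1 + Real.log t)^(j2-1) ≤ (1 + Real.log N)^(j2-1) :=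
            pow_le_pow_left₀ (by linarith) (by linarith) _
          have h4K : (4:ℝ)^j2 ≤ K1 := by
            have h := pow_pos (show (0:ℝ) < 2 by norm_num) j2
            rw [hK1def]; linarith
          calc (4:ℝ)^j2 * (1 + Real.log t)^(j2-1) / t
              = 4^j2 * (1 + Real.log t)^(j2-1) * (1/t) := by ring
            _ = 4^j2 * (1 + Real.log t)^(j2-1) * (((b:ℝ) * Real.sqrt (b:ℝ))/Real.sqrt N) := by
                rw [htinv]
            _ ≤ K1 * (1 + Real.log N)^(j2-1) * (((b:ℝ) * Real.sqrt (b:ℝ))/Real.sqrt N) := by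
                gcongr
            _ = c0 * ((b:ℝ) * Real.sqrt (b:ℝ)) := by rw [hc0]; ring
        · push_neg at hbN
          have h1 : (∑' c : Tup j2, if N < (phi c)^2 * b^3
                then ENNReal.ofReal (1/((phi c : ℕ):ℝ)^2) else 0) ≤ Zsum j2 := by
            rw [Zsum]
            apply ENNReal.tsum_le_tsum
            intro c
            split
            · exact le_refl _
            · exact zero_le
          refine h1.trans ((Zsum_le j2).trans ?_)
          have h2pow : (2:ℝ≥0∞)^j2 = ENNReal.ofReal ((2:ℝ)^j2) := by
            rw [ENNReal.ofReal_pow (by norm_num), ENNReal.ofReal_ofNat]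
          rw [h2pow]
          apply ENNReal.ofReal_le_ofReal
          have hNb : (N:ℝ) ≤ ((b:ℝ))^3 := by exact_mod_cast hbN.le
          have hsle : Real.sqrt N ≤ (b:ℝ) * Real.sqrt (b:ℝ) := by
            rw [← hsqrtb b hb1]
            exact Real.sqrt_le_sqrt hNb
          have h3 : (1:ℝ) ≤ ((b:ℝ) * Real.sqrt (b:ℝ))/Real.sqrt N := (one_le_div hsN).mpr hsle
          have h2K : (2:ℝ)^j2 ≤ K1 := by
            have h := pow_pos (show (0:ℝ) < 4 by norm_num) j2
            rw [hK1def]; linarith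
          have h4 : (1:ℝ) ≤ (1 + Real.log N)^(j2-1) := one_le_pow₀ (by linarith)
          calc (2:ℝ)^j2 ≤ K1 := h2K
            _ = K1 * 1 * 1 := by ring
            _ ≤ K1 * (1 + Real.log N)^(j2-1) * (((b:ℝ) * Real.sqrt (b:ℝ))/Real.sqrt N) := by
                gcongr
            _ = c0 * ((b:ℝ) * Real.sqrt (b:ℝ)) := by rw [hc0]; ring
      calc (∑' c : Tup j2, if N < (phi c)^2 * b^3 then w (c, e) else 0)
          = (∑' c : Tup j2, if N < (phi c)^2 * b^3
              then ENNReal.ofReal (1/((phi c : ℕ):ℝ)^2) else 0) * ENNReal.ofReal (1/((b:ℝ))^3) := by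
            rw [tsum_congr hsplit, ENNReal.tsum_mul_right]
        _ ≤ ENNReal.ofReal (c0 * ((b:ℝ) * Real.sqrt (b:ℝ))) * ENNReal.ofReal (1/((b:ℝ))^3) :=
            mul_le_mul' hkey (le_refl _)
        _ = ENNReal.ofReal c0 * ENNReal.ofReal (1/((b:ℝ) * Real.sqrt (b:ℝ))) := by
            rw [← ENNReal.ofReal_mul (by positivity), ← ENNReal.ofReal_mul hc0nn]
            congr 1
            have hbb : Real.sqrt (b:ℝ) * Real.sqrt (b:ℝ) = (b:ℝ) := Real.mul_self_sqrt hbr0.le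
            have hsq : ((b:ℝ)*Real.sqrt (b:ℝ))*((b:ℝ)*Real.sqrt (b:ℝ)) = ((b:ℝ))^3 := by
              rw [mul_mul_mul_comm, hbb]; ring
            rw [← hsq]
            field_simp
    calc (∑' q : Tup j2 × Tup j3, if N < (phi q.1)^2 * (phi q.2)^3 then w q else 0)
        = ∑' (c : Tup j2) (e : Tup j3), (if N < (phi c)^2 * (phi e)^3 then w (c, e) else 0) := by
          rw [← ENNReal.tsum_prod (f := fun c e => if N < (phi c)^2*(phi e)^3 then w (c,e) else 0)]
      _ = ∑' (e : Tup j3) (c : Tup j2), (if N < (phi c)^2 * (phi e)^3 then w (c, e) else 0) :=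
          ENNReal.tsum_comm
      _ ≤ ∑' (e : Tup j3), ENNReal.ofReal c0
            * ENNReal.ofReal (1/(((phi e : ℕ):ℝ) * Real.sqrt ((phi e : ℕ):ℝ))) :=
          ENNReal.tsum_le_tsum inner
      _ = ENNReal.ofReal c0 * Bsum j3 := by rw [ENNReal.tsum_mul_left, Bsum]
      _ ≤ ENNReal.ofReal c0 * 3^j3 := mul_le_mul' (le_refl _) (Bsum_le j3)
  -- final real inequality
  have hfinal : K1 * (1 + Real.log N)^(j2-1) / Real.sqrt N * 3^j3 ≤ RHS := by
    have hlogN2 : Real.log 2 ≤ Real.log N := Real.log_le_log (by norm_num) hNR2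
    have hq : 1 ≤ Real.log N / Real.log 2 := (one_le_div hl2).mpr hlogN2
    obtain ⟨a2, ha2⟩ := Nat.exists_eq_add_of_le hj21
    obtain ⟨a3, ha3⟩ := Nat.exists_eq_add_of_le hj31
    have e2 : k^2 = j2 := by rw [hj2]; ring
    have e3 : k^3 = j3 := by rw [hj3]; ring
    have hEeq : E = a2 + a3 := by rw [hE, e2, e3, ha2, ha3]; omega
    have hc2 : j2 - 1 = a2 := by omega
    have hc3 : j3 - 1 = a3 := by omega
    have hb1 : 1 + Real.log N ≤ (1 + 1/Real.log 2) * Real.log N := by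
      have h2 : 1 ≤ Real.log N * (1/Real.log 2) := by
        rw [mul_one_div]; exact hq
      nlinarith
    have hb2 : (1:ℝ) ≤ ((1/Real.log 2) * Real.log N)^a3 := by
      apply one_le_pow₀
      rw [one_div, inv_mul_eq_div]
      exact hq
    have hstep : (1 + Real.log N)^a2
        ≤ ((1 + 1/Real.log 2) * Real.log N)^a2 * ((1/Real.log 2) * Real.log N)^a3 := by
      calc (1 + Real.log N)^a2 ≤ ((1 + 1/Real.log 2) * Real.log N)^a2 :=
            pow_le_pow_left₀ (by linarith) hb1 a2
        _ = ((1 + 1/Real.log 2) * Real.log N)^a2 * 1 := by ring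
        _ ≤ ((1 + 1/Real.log 2) * Real.log N)^a2 * ((1/Real.log 2) * Real.log N)^a3 := by
            apply mul_le_mul_of_nonneg_left hb2
            positivity
    calc K1 * (1 + Real.log N)^(j2-1) / Real.sqrt N * 3^j3
        = K1 * 3^j3 * (1 + Real.log N)^a2 / Real.sqrt N := by rw [hc2]; ring
      _ ≤ K1 * 3^j3 * (((1 + 1/Real.log 2) * Real.log N)^a2
            * ((1/Real.log 2) * Real.log N)^a3) / Real.sqrt N := by gcongr
      _ = RHS := by
          rw [hRHS, hCdef, hEeq, hc2, hc3, pow_add, mul_pow, mul_pow]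
          ring
  -- combine
  have main : (∑' n : ℕ, ENNReal.ofReal (term n)) ≤ ENNReal.ofReal RHS := by
    calc (∑' n : ℕ, ENNReal.ofReal (term n)) ≤ ∑' (n : ℕ) (q : Tup j2 × Tup j3), f n q :=
          ENNReal.tsum_le_tsum step1
      _ = ∑' (q : Tup j2 × Tup j3) (n : ℕ), f n q := ENNReal.tsum_comm
      _ ≤ ∑' q : Tup j2 × Tup j3, (if N < (phi q.1)^2 * (phi q.2)^3 then w q else 0) :=
          ENNReal.tsum_le_tsum step2
      _ ≤ ENNReal.ofReal (K1 * (1 + Real.log N)^(j2-1) / Real.sqrt N) * 3^j3 := step3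
      _ = ENNReal.ofReal (K1 * (1 + Real.log N)^(j2-1) / Real.sqrt N * 3^j3) := by
          rw [ENNReal.ofReal_mul (by positivity)]
          congr 1
          rw [ENNReal.ofReal_pow (by norm_num), ENNReal.ofReal_ofNat]
      _ ≤ ENNReal.ofReal RHS := ENNReal.ofReal_le_ofReal hfinal
  have hne : (∑' n, ENNReal.ofReal (term n)) ≠ ⊤ := ne_top_of_le_ne_top ENNReal.ofReal_ne_top main
  have hsumm : Summable term := by
    have h1 := ENNReal.summable_toReal hne
    exact h1.congr (fun n => ENNReal.toReal_ofReal (htermnn n))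
  have heq : ENNReal.ofReal (∑' n, term n) = ∑' n, ENNReal.ofReal (term n) :=
    ENNReal.ofReal_tsum_of_nonneg htermnn hsumm
  have hle : ENNReal.ofReal (∑' n, term n) ≤ ENNReal.ofReal RHS := heq ▸ main
  exact (ENNReal.ofReal_le_ofReal_iff hRHSnn).mp hle
end

section
/- Let f ∈ Z[x] be an irreducible cubic polynomial with nonzero discriminant and leading coefficient a. Let d be a square-free integer, and let x, y be rational numbers with y ≠ 0 such that P = (x, d^{1/2}·y) lies on E : y^2 = f(x). Then the height h_y(P) with respect to the y-coordinate satisfies h_y(P) ≥ (3/8)·log|d| − (1/2)·log|a|. -/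
-- auxiliary lemma: squarefree s, each prime of s has p^k ∣ n ⇒ s^k ∣ n
lemma aux_pow_dvd {s n k : ℕ} (hs : Squarefree s) (hn : n ≠ 0)
    (h : ∀ p : ℕ, p.Prime → p ∣ s → p ^ k ∣ n) : s ^ k ∣ n := by
  refine (Nat.factorization_le_iff_dvd (pow_ne_zero k hs.ne_zero) hn).mp ?_
  rw [Finsupp.le_def]
  intro p
  rw [Nat.factorization_pow]
  by_cases hp : p.Prime
  · by_cases hps : p ∣ s
    · have h1 : s.factorization p ≤ 1 := hs.natFactorization_le_one p
      have h2 : k ≤ n.factorization p :=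
        (Nat.Prime.pow_dvd_iff_le_factorization hp hn).mp (h p hp hps)
      simp only [Finsupp.smul_apply, smul_eq_mul]
      calc k * s.factorization p ≤ k * 1 := Nat.mul_le_mul_left _ h1
        _ ≤ n.factorization p := by omega
    · simp [Nat.factorization_eq_zero_of_not_dvd hps]
  · simp [Nat.factorization_eq_zero_of_not_prime _ hp]

-- key local lemma
lemma aux_key (f : Cubic ℤ) (d : ℤ) (hd : Squarefree d) (m u : ℤ) (n w : ℕ)
    (hm : m ≠ 0) (hn : n ≠ 0) (hw : w ≠ 0)
    (hmn : m.natAbs.Coprime n) (huw : u.natAbs.Coprime w)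
    (hE : d * m ^ 2 * (w : ℤ) ^ 3 =
      (n : ℤ) ^ 2 * (f.a * u ^ 3 + f.b * u ^ 2 * w + f.c * u * w ^ 2 + f.d * w ^ 3))
    (p : ℕ) (hp : p.Prime) (hpd : (p : ℤ) ∣ d) (hpn : p ∣ n) (hpa : ¬ (p : ℤ) ∣ f.a) :
    p ^ 2 ∣ n := by
  set S : ℤ := f.a * u ^ 3 + f.b * u ^ 2 * w + f.c * u * w ^ 2 + f.d * w ^ 3 with hS
  have hd0 : d ≠ 0 := hd.ne_zero
  have hS0 : S ≠ 0 := by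
    intro h0
    rw [h0, mul_zero] at hE
    have : d * m ^ 2 * (w : ℤ) ^ 3 ≠ 0 := by positivity
    exact this hE
  -- natAbs equation
  have hEn : d.natAbs * m.natAbs ^ 2 * w ^ 3 = n ^ 2 * S.natAbs := by
    have := congrArg Int.natAbs hE
    simpa [Int.natAbs_mul, Int.natAbs_pow] using this
  have hda0 : d.natAbs ≠ 0 := by simpa using hd0
  have hma0 : m.natAbs ≠ 0 := by simpa using hm
  have hSa0 : S.natAbs ≠ 0 := by simpa using hS0
  have hfac := congrArg (fun t => Nat.factorization t p) hEn
  simp only [Nat.factorization_mul (mul_ne_zero hda0 (pow_ne_zero _ hma0)) (pow_ne_zero _ hw),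
    Nat.factorization_mul hda0 (pow_ne_zero _ hma0),
    Nat.factorization_mul (pow_ne_zero _ hn) hSa0,
    Nat.factorization_pow, Finsupp.add_apply, Finsupp.smul_apply, smul_eq_mul] at hfac
  -- fm = 0
  have hpm : ¬ p ∣ m.natAbs := by
    intro hc
    have h1 : p ∣ Nat.gcd m.natAbs n := Nat.dvd_gcd hc hpn
    rw [Nat.Coprime.gcd_eq_one hmn] at h1
    exact hp.one_lt.not_ge (Nat.le_of_dvd one_pos h1)
  have hfm : m.natAbs.factorization p = 0 := Nat.factorization_eq_zero_of_not_dvd hpm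
  -- fd = 1
  have hpda : p ∣ d.natAbs := Int.natAbs_dvd_natAbs.mpr (by simpa using hpd)
  have hsqd : Squarefree d.natAbs := Int.squarefree_natAbs.mpr hd
  have hfd : d.natAbs.factorization p = 1 := by
    have h1 : d.natAbs.factorization p ≤ 1 := hsqd.natFactorization_le_one p
    have h2 : 1 ≤ d.natAbs.factorization p :=
      (Nat.Prime.pow_dvd_iff_le_factorization hp hda0).mp (by simpa using hpda)
    omega
  have hfn : 1 ≤ n.factorization p :=
    (Nat.Prime.pow_dvd_iff_le_factorization hp hn).mp (by simpa using hpn)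
  -- case fw = 0 impossible
  have hfw : 1 ≤ w.factorization p := by
    by_contra hcon
    have h0 : w.factorization p = 0 := by omega
    rw [hfd, hfm, h0] at hfac
    omega
  -- p ∣ w
  have hpw : p ∣ w := Nat.dvd_of_factorization_pos (by omega)
  have hpu : ¬ (p : ℤ) ∣ u := by
    intro hc
    have hcn : p ∣ u.natAbs := Int.natAbs_dvd_natAbs.mpr (by simpa using hc)
    have h1 : p ∣ Nat.gcd u.natAbs w := Nat.dvd_gcd hcn hpw
    rw [Nat.Coprime.gcd_eq_one huw] at h1
    exact hp.one_lt.not_ge (Nat.le_of_dvd one_pos h1)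
  have hpS : ¬ (p : ℤ) ∣ S := by
    intro hc
    have hw' : (p : ℤ) ∣ (w : ℤ) := Int.natCast_dvd_natCast.mpr hpw
    have h2 : (p : ℤ) ∣ f.a * u ^ 3 := by
      have : f.a * u ^ 3 = S - (w : ℤ) * (f.b * u ^ 2 + f.c * u * w + f.d * w ^ 2) := by
        rw [hS]; ring
      rw [this]
      exact dvd_sub hc (Dvd.dvd.mul_right hw' _)
    rcases (Int.Prime.dvd_mul' hp h2) with h3 | h3
    · exact hpa h3
    · exact hpu (Int.Prime.dvd_pow' hp h3)
  have hfS : S.natAbs.factorization p = 0 :=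
    Nat.factorization_eq_zero_of_not_dvd (fun hc => hpS (Int.natAbs_dvd.mp (dvd_trans (dvd_refl _) ((Int.natAbs_dvd_natAbs).mp (by simpa using hc) : _))))
  rw [hfd, hfm, hfS] at hfac
  have : 2 ≤ n.factorization p := by omega
  exact (Nat.Prime.pow_dvd_iff_le_factorization hp hn).mpr this

/-- Let `f ∈ ℤ[x]` be an irreducible cubic with nonzero discriminant and leading
coefficient `a`.  Let `d` be square-free and `x, y ∈ ℚ` with `y ≠ 0` such that
`P = (x, √d·y)` lies on `E : y² = f(x)` (equivalently `d·y² = f(x)`).  Then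
`h_y(P) ≥ (3/8)·log|d| − (1/2)·log|a|`.

Here `h_y(P) = log H(√d·y)` is the logarithmic Weil height of the `y`-coordinate; since
`H(α²) = H(α)²`, this equals `(1/2)·log H(d·y²) = (1/2)·log max(|num(d·y²)|, den(d·y²))`,
which is the form used below. -/
theorem stmt_12 (f : Cubic ℤ) (ha : f.a ≠ 0) (hdisc : f.discr ≠ 0)
    (hirr : Irreducible (f.toPoly.map (Int.castRingHom ℚ)))
    (d : ℤ) (hd : Squarefree d) (x y : ℚ) (hy : y ≠ 0)
    (hxy : (d : ℚ) * y ^ 2 = Polynomial.eval x (f.toPoly.map (Int.castRingHom ℚ))) :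
    (3 / 8) * Real.log |(d : ℝ)| - (1 / 2) * Real.log |(f.a : ℝ)| ≤
      (1 / 2) * Real.log (max (|((d : ℚ) * y ^ 2).num| : ℝ) (((d : ℚ) * y ^ 2).den : ℝ)) := by
  set q : ℚ := (d : ℚ) * y ^ 2 with hq
  set m : ℤ := y.num with hmdef
  set n : ℕ := y.den with hndef
  set u : ℤ := x.num with hudef
  set w : ℕ := x.den with hwdef
  have hd0 : d ≠ 0 := hd.ne_zero
  have hm : m ≠ 0 := Rat.num_ne_zero.mpr hy
  have hn : n ≠ 0 := y.den_nz
  have hw : w ≠ 0 := x.den_nz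
  have hq0 : q ≠ 0 := by
    rw [hq]
    exact mul_ne_zero (by exact_mod_cast hd0) (pow_ne_zero 2 hy)
  have hqn0 : q.num ≠ 0 := Rat.num_ne_zero.mpr hq0
  -- the integral cubic equation
  have hEq : d * m ^ 2 * (w : ℤ) ^ 3 =
      (n : ℤ) ^ 2 * (f.a * u ^ 3 + f.b * u ^ 2 * w + f.c * u * w ^ 2 + f.d * w ^ 3) := by
    have hyv : (y : ℚ) = (m : ℚ) / (n : ℚ) := (Rat.num_div_den y).symm
    have hxv : (x : ℚ) = (u : ℚ) / (w : ℚ) := (Rat.num_div_den x).symm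
    have hn' : ((n : ℚ)) ≠ 0 := by exact_mod_cast hn
    have hw' : ((w : ℚ)) ≠ 0 := by exact_mod_cast hw
    have h2 : (d : ℚ) * y ^ 2 = (f.a : ℚ) * x ^ 3 + (f.b : ℚ) * x ^ 2 + (f.c : ℚ) * x + (f.d : ℚ) := by
      rw [← hq, hxy]
      simp [Cubic.toPoly, Polynomial.eval_map]
    have e1 : (m : ℚ) = y * n := by
      rw [hyv]; field_simp
    have e2 : (u : ℚ) = x * w := by
      rw [hxv]; field_simp
    have h4 : (d : ℚ) * (m : ℚ) ^ 2 * (w : ℚ) ^ 3 =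
        (n : ℚ) ^ 2 * ((f.a : ℚ) * (u : ℚ) ^ 3 + (f.b : ℚ) * (u : ℚ) ^ 2 * (w : ℚ)
          + (f.c : ℚ) * (u : ℚ) * (w : ℚ) ^ 2 + (f.d : ℚ) * (w : ℚ) ^ 3) := by
      rw [e1, e2]
      linear_combination ((n : ℚ) ^ 2 * (w : ℚ) ^ 3) * h2
    exact_mod_cast h4
  -- num/den identity
  have hcross : q.num * (n : ℤ) ^ 2 = d * m ^ 2 * (q.den : ℤ) := by
    have hqd' : ((q.den : ℚ)) ≠ 0 := by exact_mod_cast q.den_nz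
    have e0 : ((q.num : ℚ)) = q * (q.den : ℚ) := by
      exact (Rat.mul_den_eq_num q).symm
    have e1 : (m : ℚ) = y * n := by
      rw [(Rat.num_div_den y).symm]; field_simp; rfl
    have h4 : ((q.num : ℚ)) * (n : ℚ) ^ 2 = (d : ℚ) * (m : ℚ) ^ 2 * (q.den : ℚ) := by
      rw [e0, e1, hq]; ring
    exact_mod_cast h4
  set N : ℕ := q.num.natAbs with hNdef
  set D : ℕ := q.den with hDdef
  have hN0 : N ≠ 0 := Int.natAbs_ne_zero.mpr hqn0
  have hD0 : D ≠ 0 := q.den_nz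
  set da : ℕ := d.natAbs with hdadef
  set ma : ℕ := m.natAbs with hmadef
  set aa : ℕ := f.a.natAbs with haadef
  have hda0 : da ≠ 0 := Int.natAbs_ne_zero.mpr hd0
  have hma0 : ma ≠ 0 := Int.natAbs_ne_zero.mpr hm
  have haa0 : aa ≠ 0 := Int.natAbs_ne_zero.mpr ha
  -- D divides n^2
  have hcrossN : N * n ^ 2 = da * ma ^ 2 * D := by
    have := congrArg Int.natAbs hcross
    simpa [Int.natAbs_mul, Int.natAbs_pow] using this
  have hcop : N.Coprime D := q.reduced
  have hDdvd : D ∣ n ^ 2 := by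
    have h1 : D ∣ N * n ^ 2 := ⟨da * ma ^ 2, by rw [hcrossN]; ring⟩
    exact (Nat.Coprime.symm hcop).dvd_of_dvd_mul_left h1
  set g : ℕ := n ^ 2 / D with hgdef
  have hDg : D * g = n ^ 2 := Nat.mul_div_cancel' hDdvd
  have hg0 : g ≠ 0 := by
    intro h0
    rw [h0, mul_zero] at hDg
    exact (pow_ne_zero 2 hn) hDg.symm
  -- N * g = da * ma ^ 2
  have hNg : N * g = da * ma ^ 2 := by
    have h1 : N * g * D = da * ma ^ 2 * D := by
      calc N * g * D = N * (D * g) := by ring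
        _ = N * n ^ 2 := by rw [hDg]
        _ = da * ma ^ 2 * D := hcrossN
    exact Nat.eq_of_mul_eq_mul_right (Nat.pos_of_ne_zero hD0) h1
  -- g divides da
  have hgn2 : g ∣ n ^ 2 := ⟨D, by rw [← hDg]; ring⟩
  have hmn : ma.Coprime n := y.reduced
  have hgma : g.Coprime ma := Nat.Coprime.coprime_dvd_left hgn2 (hmn.symm.pow_left 2)
  have hgda : g ∣ da := by
    have h1 : g ∣ da * ma ^ 2 := ⟨N, by rw [← hNg]; ring⟩
    exact (hgma.pow_right 2).dvd_of_dvd_mul_right h1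
  have hsqg : Squarefree g := (Int.squarefree_natAbs.mpr hd).squarefree_of_dvd hgda
  -- split g into the part dividing a and the rest
  set g1 : ℕ := g.gcd aa with hg1def
  set g2 : ℕ := g / g1 with hg2def
  have hg1dvd : g1 ∣ g := Nat.gcd_dvd_left g aa
  have hg12 : g1 * g2 = g := Nat.mul_div_cancel' hg1dvd
  have hg2dvd : g2 ∣ g := ⟨g1, by rw [← hg12]; ring⟩
  have hsq12 : Squarefree (g1 * g2) := by rw [hg12]; exact hsqg
  have hcop12 : g1.Coprime g2 := Nat.squarefree_mul_iff.mp hsq12 |>.1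
  have hsqg1 : Squarefree g1 := hsqg.squarefree_of_dvd hg1dvd
  have hsqg2 : Squarefree g2 := hsqg.squarefree_of_dvd hg2dvd
  have hg10 : g1 ≠ 0 := hsqg1.ne_zero
  have hg20 : g2 ≠ 0 := hsqg2.ne_zero
  -- every prime of g divides n
  have hpgn : ∀ p : ℕ, p.Prime → p ∣ g → p ∣ n := fun p hp hpg =>
    hp.dvd_of_dvd_pow (hpg.trans hgn2)
  -- key: every prime of g2 has p^2 ∣ n
  have hkey : ∀ p : ℕ, p.Prime → p ∣ g2 → p ^ 2 ∣ n := by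
    intro p hp hpg2
    have hpg : p ∣ g := hpg2.trans hg2dvd
    have hpn : p ∣ n := hpgn p hp hpg
    have hpa : ¬ (p : ℤ) ∣ f.a := by
      intro hc
      have hcn : p ∣ aa := Int.natAbs_dvd_natAbs.mpr (by simpa using hc)
      have h1 : p ∣ g1 := Nat.dvd_gcd hpg hcn
      have h2 : p ∣ Nat.gcd g1 g2 := Nat.dvd_gcd h1 hpg2
      rw [Nat.Coprime.gcd_eq_one hcop12] at h2
      exact hp.one_lt.not_ge (Nat.le_of_dvd one_pos h2)
    have hpd : (p : ℤ) ∣ d := by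
      have : p ∣ da := hpg.trans hgda
      exact Int.natAbs_dvd_natAbs.mp (by simpa using this)
    exact aux_key f d hd m u n w hm hn hw hmn x.reduced hEq p hp hpd hpn hpa
  have hg2sq : g2 ^ 2 ∣ n := aux_pow_dvd hsqg2 hn hkey
  have hg1n : g1 ^ 1 ∣ n := aux_pow_dvd hsqg1 hn (fun p hp hpg1 => by
    simpa using hpgn p hp (hpg1.trans hg1dvd))
  rw [pow_one] at hg1n
  -- g1 * g2^3 divides D
  have hbig : g1 ^ 2 * g2 ^ 4 ∣ n ^ 2 := by
    have h1 : g1 ^ 2 ∣ n ^ 2 := pow_dvd_pow_of_dvd hg1n 2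
    have h2 : g2 ^ 4 ∣ n ^ 2 := by
      have : (g2 ^ 2) ^ 2 ∣ n ^ 2 := pow_dvd_pow_of_dvd hg2sq 2
      simpa [← pow_mul] using this
    exact (hcop12.pow 2 4).mul_dvd_of_dvd_of_dvd h1 h2
  have hgD : g1 * g2 ^ 3 ∣ D := by
    have h1 : (g1 * g2 ^ 3) * g ∣ D * g := by
      rw [hDg, ← hg12]
      have : (g1 * g2 ^ 3) * (g1 * g2) = g1 ^ 2 * g2 ^ 4 := by ring
      rw [this]
      exact hbig
    exact (Nat.mul_dvd_mul_iff_right (Nat.pos_of_ne_zero hg0)).mp h1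
  -- numeric inequalities
  have hg1aa : g1 ≤ aa := Nat.le_of_dvd (Nat.pos_of_ne_zero haa0) (Nat.gcd_dvd_right g aa)
  have hDge : g1 * g2 ^ 3 ≤ D := Nat.le_of_dvd (Nat.pos_of_ne_zero hD0) hgD
  have hNgge : da ≤ N * g := by
    rw [hNg]
    calc da = da * 1 := (mul_one da).symm
      _ ≤ da * ma ^ 2 := Nat.mul_le_mul_left da (Nat.one_le_iff_ne_zero.mpr (pow_ne_zero 2 hma0))
  -- main integer inequality : da^3 ≤ aa^2 * N^3 * D
  have hg3 : g ^ 3 ≤ aa ^ 2 * D := by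
    calc g ^ 3 = (g1 * g2) ^ 3 := by rw [hg12]
      _ = g1 ^ 2 * (g1 * g2 ^ 3) := by ring
      _ ≤ aa ^ 2 * D := Nat.mul_le_mul (Nat.pow_le_pow_left hg1aa 2) hDge
  have hmain : da ^ 3 ≤ aa ^ 2 * N ^ 3 * D := by
    calc da ^ 3 ≤ (N * g) ^ 3 := Nat.pow_le_pow_left hNgge 3
      _ = N ^ 3 * g ^ 3 := by ring
      _ ≤ N ^ 3 * (aa ^ 2 * D) := Nat.mul_le_mul_left _ hg3
      _ = aa ^ 2 * N ^ 3 * D := by ring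
  -- pass to the max and take logs
  set M : ℕ := max N D with hMdef
  have hNM : N ≤ M := le_max_left N D
  have hDM : D ≤ M := le_max_right N D
  have hM1 : 1 ≤ M := le_trans (Nat.one_le_iff_ne_zero.mpr hD0) hDM
  have hmain2 : da ^ 3 ≤ aa ^ 2 * M ^ 4 := by
    calc da ^ 3 ≤ aa ^ 2 * N ^ 3 * D := hmain
      _ ≤ aa ^ 2 * M ^ 3 * M := by
          exact Nat.mul_le_mul (Nat.mul_le_mul_left _ (Nat.pow_le_pow_left hNM 3)) hDM
      _ = aa ^ 2 * M ^ 4 := by ring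
  -- real versions
  have hdaR : |(d : ℝ)| = (da : ℝ) := by
    rw [hdadef, Nat.cast_natAbs]; push_cast; ring
  have haaR : |(f.a : ℝ)| = (aa : ℝ) := by
    rw [haadef, Nat.cast_natAbs]; push_cast; ring
  have hmaxR : max (|q.num| : ℝ) ((q.den : ℝ)) = (M : ℝ) := by
    rw [hMdef, Nat.cast_max, hNdef, Nat.cast_natAbs]
    push_cast
    rfl
  have hlog : 3 * Real.log da ≤ 2 * Real.log aa + 4 * Real.log M := by
    have hpos : (0 : ℝ) < (da : ℝ) ^ 3 := by positivity
    have h1 : ((da : ℝ)) ^ 3 ≤ (aa : ℝ) ^ 2 * (M : ℝ) ^ 4 := by exact_mod_cast hmain2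
    have h2 := Real.log_le_log hpos h1
    rw [Real.log_pow, Real.log_mul (by positivity) (by positivity), Real.log_pow, Real.log_pow] at h2
    push_cast at h2
    linarith
  have hlogaa : 0 ≤ Real.log aa := Real.log_nonneg (by exact_mod_cast Nat.one_le_iff_ne_zero.mpr haa0)
  have hlogM : 0 ≤ Real.log M := Real.log_nonneg (by exact_mod_cast hM1)
  rw [hdaR, haaR, hmaxR]
  linarith
end

section
/- Let K be a number field and L a finite Galois extension of K with [L:K] odd. Then for every nonzero ideal a of O_K, the completely multiplicative Liouville function satisfies λ_L(a·O_L) = λ_K(a), where λ_K(a) = (−1)^{Ω_K(a)} with Ω_K the number of prime ideal factors of a counted with multiplicity. -/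
open NumberField

/-- The Liouville function of a nonzero ideal of the ring of integers of a number field:
`λ(𝔭₁^{e₁} ⋯ 𝔭ₖ^{eₖ}) = (−1)^{e₁+⋯+eₖ}`. -/
noncomputable def lambdaIdeal {F : Type} [Field F] [NumberField F] (a : Ideal (𝓞 F)) : ℤ :=
  (-1) ^ Multiset.card (UniqueFactorizationMonoid.normalizedFactors a)

open Ideal UniqueFactorizationMonoid in
lemma lambdaIdeal_mul {F : Type} [Field F] [NumberField F] {x y : Ideal (𝓞 F)}
    (hx : x ≠ 0) (hy : y ≠ 0) : lambdaIdeal (x * y) = lambdaIdeal x * lambdaIdeal y := by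
  unfold lambdaIdeal
  rw [normalizedFactors_mul hx hy, Multiset.card_add, pow_add]

open Ideal UniqueFactorizationMonoid in
lemma lambdaIdeal_prime {F : Type} [Field F] [NumberField F] {q : Ideal (𝓞 F)}
    (hq : Prime q) : lambdaIdeal q = -1 := by
  unfold lambdaIdeal
  rw [normalizedFactors_irreducible hq.irreducible, Multiset.card_singleton, pow_one]

lemma aux_inj (K L : Type) [Field K] [Field L] [NumberField K] [NumberField L]
    [Algebra K L] : Function.Injective (algebraMap (𝓞 K) (𝓞 L)) := by
  intro x y h
  have h2 := congrArg (algebraMap (𝓞 L) L) h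
  rw [← IsScalarTower.algebraMap_apply, ← IsScalarTower.algebraMap_apply,
    IsScalarTower.algebraMap_apply (𝓞 K) K L, IsScalarTower.algebraMap_apply (𝓞 K) K L] at h2
  exact FaithfulSMul.algebraMap_injective (𝓞 K) K
    ((algebraMap K L).injective h2)

open Ideal UniqueFactorizationMonoid in
/-- Transitivity of the Galois action on primes above a given prime. -/
lemma aux_exists (K L : Type) [Field K] [Field L] [NumberField K] [NumberField L]
    [Algebra K L] [IsGalois K L] (P Q : Ideal (𝓞 L)) (hP : P.IsPrime) (hQ : Q.IsPrime)
    (hP0 : P ≠ ⊥) (hQ0 : Q ≠ ⊥)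
    (h : P.comap (algebraMap (𝓞 K) (𝓞 L)) = Q.comap (algebraMap (𝓞 K) (𝓞 L))) :
    ∃ σ : L ≃ₐ[K] L, P.map (galRestrict (𝓞 K) K L (𝓞 L) σ) = Q := by
  classical
  by_contra hcon
  push_neg at hcon
  have hQmax : Q.IsMaximal := hQ.isMaximal hQ0
  have hmax : ∀ σ : L ≃ₐ[K] L, (P.map (galRestrict (𝓞 K) K L (𝓞 L) σ)).IsMaximal := by
    intro σ
    have hpr : (P.map (galRestrict (𝓞 K) K L (𝓞 L) σ)).IsPrime :=
      Ideal.map_isPrime_of_equiv _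
    refine hpr.isMaximal ?_
    rw [Ne, Ideal.map_eq_bot_iff_of_injective (AlgEquiv.injective _)]
    exact hP0
  by_cases hsub : (Q : Set (𝓞 L)) ⊆
      ⋃ σ ∈ ((Finset.univ : Finset (L ≃ₐ[K] L)) : Set (L ≃ₐ[K] L)),
        ((P.map (galRestrict (𝓞 K) K L (𝓞 L) σ) : Ideal (𝓞 L)) : Set (𝓞 L))
  · obtain ⟨σ, -, hle⟩ :=
      (Ideal.subset_union_prime 1 1 (fun σ _ _ _ => Ideal.map_isPrime_of_equiv _)).mp hsub
    exact hcon σ (hQmax.eq_of_le (hmax σ).ne_top hle).symm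
  rw [Set.not_subset] at hsub
  obtain ⟨x, hxQ, hx⟩ := hsub
  have hx' : ∀ σ : L ≃ₐ[K] L, x ∉ P.map (galRestrict (𝓞 K) K L (𝓞 L) σ) := by
    intro σ hmem
    exact hx (Set.mem_biUnion (by simp) hmem)
  have hxQ' : x ∈ Q := hxQ
  -- the "norm" of x
  have hprod := prod_galRestrict_eq_norm (𝓞 K) K L (𝓞 L) x
  set n : 𝓞 K := IsIntegralClosure.mk' (𝓞 K)
    (Algebra.norm K <| algebraMap (𝓞 L) L x)
    (Algebra.isIntegral_norm K (IsIntegralClosure.isIntegral (𝓞 K) L x).algebraMap) with hn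
  have hyQ : (∏ σ : L ≃ₐ[K] L, galRestrict (𝓞 K) K L (𝓞 L) σ x) ∈ Q := by
    rw [← Finset.mul_prod_erase Finset.univ _ (Finset.mem_univ (1 : L ≃ₐ[K] L))]
    refine Ideal.mul_mem_right _ _ ?_
    simpa using hxQ'
  rw [hprod] at hyQ
  have hnQ : n ∈ Q.comap (algebraMap (𝓞 K) (𝓞 L)) := hyQ
  rw [← h] at hnQ
  have hyP : (∏ σ : L ≃ₐ[K] L, galRestrict (𝓞 K) K L (𝓞 L) σ x) ∈ P := by
    rw [hprod]; exact hnQ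
  rw [Ideal.IsPrime.prod_mem_iff (hp := hP)] at hyP
  obtain ⟨σ, -, hσ⟩ := hyP
  refine hx' σ⁻¹ ?_
  have hx_eq : x = (galRestrict (𝓞 K) K L (𝓞 L) σ)⁻¹
      (galRestrict (𝓞 K) K L (𝓞 L) σ x) :=
    (AlgEquiv.symm_apply_apply _ _).symm
  rw [map_inv, hx_eq]
  exact Ideal.mem_map_of_mem _ hσ

open Ideal UniqueFactorizationMonoid in
lemma aux_odd (K L : Type) [Field K] [Field L] [NumberField K] [NumberField L]
    [Algebra K L] [IsGalois K L] (hodd : Odd (Module.finrank K L))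
    (p : Ideal (𝓞 K)) (hp0 : p ≠ ⊥) (hpm : p.IsMaximal) :
    Odd (Multiset.card (normalizedFactors (p.map (algebraMap (𝓞 K) (𝓞 L))))) := by
  classical
  haveI := hpm
  haveI : Module.Finite (𝓞 K) (𝓞 L) := Module.IsNoetherian.finite (𝓞 K) (𝓞 L)
  have hinj : Function.Injective (algebraMap (𝓞 K) (𝓞 L)) := aux_inj K L
  have hmap0 : p.map (algebraMap (𝓞 K) (𝓞 L)) ≠ ⊥ := by
    rw [Ne, Ideal.map_eq_bot_iff_of_injective hinj]; exact hp0
  have hmapTop : p.map (algebraMap (𝓞 K) (𝓞 L)) ≠ ⊤ := by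
    rw [Ne, Ideal.map_eq_top_iff (algebraMap (𝓞 K) (𝓞 L)) hinj
      (fun x => Algebra.IsIntegral.isIntegral x)]
    exact hpm.ne_top
  set t := (normalizedFactors (p.map (algebraMap (𝓞 K) (𝓞 L)))).toFinset with ht
  have hprime : ∀ P ∈ t, P.IsPrime := fun P hP =>
    isPrime_of_prime (prime_of_normalized_factor P (Multiset.mem_toFinset.mp hP))
  have hne : ∀ P ∈ t, P ≠ ⊥ := fun P hP =>
    (prime_of_normalized_factor P (Multiset.mem_toFinset.mp hP)).ne_zero
  have hover : ∀ P ∈ t, P.comap (algebraMap (𝓞 K) (𝓞 L)) = p := by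
    intro P hP
    have hle : p.map (algebraMap (𝓞 K) (𝓞 L)) ≤ P :=
      le_of_dvd (dvd_of_mem_normalizedFactors (Multiset.mem_toFinset.mp hP))
    exact (hpm.eq_of_le (((hprime P hP).comap (algebraMap (𝓞 K) (𝓞 L))).ne_top)
      (Ideal.map_le_iff_le_comap.mp hle)).symm
  obtain ⟨P₀, hP₀m⟩ : ∃ P, P ∈ normalizedFactors (p.map (algebraMap (𝓞 K) (𝓞 L))) := by
    refine Multiset.exists_mem_of_ne_zero ?_
    have := (normalizedFactors_pos _ hmap0).mpr (by rw [Ideal.isUnit_iff]; exact hmapTop)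
    exact this.ne'
  have hP₀ : P₀ ∈ t := Multiset.mem_toFinset.mpr hP₀m
  have hconst : ∀ P ∈ t,
      ramificationIdx' p P =
        ramificationIdx' p P₀ ∧
      inertiaDeg' p P =
        inertiaDeg' p P₀ := by
    intro P hP
    obtain ⟨σ, hσ⟩ := aux_exists K L P₀ P (hprime _ hP₀) (hprime _ hP) (hne _ hP₀) (hne _ hP)
      ((hover _ hP₀).trans (hover _ hP).symm)
    rw [← hσ]
    exact ⟨Ideal.ramificationIdx'_map_eq p P₀ _, Ideal.inertiaDeg'_map_eq p P₀ _⟩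
  have hsum : ∑ P ∈ t, ramificationIdx' p P *
      inertiaDeg' p P = Module.finrank K L := by
    have := Ideal.sum_ramification_inertia (S := 𝓞 L) (p := p) K L hp0
    rwa [IsDedekindDomain.primesOverFinset, factors_eq_normalizedFactors] at this
  rw [Finset.sum_congr rfl (fun P hP => by rw [(hconst P hP).1, (hconst P hP).2]),
    Finset.sum_const, smul_eq_mul] at hsum
  have hoddall : Odd (t.card * (ramificationIdx' p P₀ *
      inertiaDeg' p P₀)) := hsum ▸ hodd
  rw [Nat.odd_mul, Nat.odd_mul] at hoddall
  have hcard : Multiset.card (normalizedFactors (p.map (algebraMap (𝓞 K) (𝓞 L)))) =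
      ∑ P ∈ t, ramificationIdx' p P := by
    rw [← Multiset.toFinset_sum_count_eq]
    exact Finset.sum_congr rfl fun P hP =>
      (Ideal.IsDedekindDomain.ramificationIdx'_eq_normalizedFactors_count hmap0
        (hprime P hP) (hne P hP)).symm
  rw [hcard, Finset.sum_congr rfl (fun P hP => (hconst P hP).1), Finset.sum_const, smul_eq_mul]
  exact Nat.odd_mul.mpr ⟨hoddall.1, hoddall.2.1⟩

/-- Let `K` be a number field and `L` a finite Galois extension of `K` of odd degree.
Then for every nonzero ideal `a` of `𝓞 K`, `λ_L(a·𝓞 L) = λ_K(a)`. -/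
theorem stmt_16 (K L : Type) [Field K] [Field L] [NumberField K] [NumberField L]
    [Algebra K L] [IsGalois K L] (hodd : Odd (Module.finrank K L))
    (a : Ideal (𝓞 K)) (ha : a ≠ 0) :
    lambdaIdeal (Ideal.map (algebraMap (𝓞 K) (𝓞 L)) a) = lambdaIdeal a := by
  have hinj : Function.Injective (algebraMap (𝓞 K) (𝓞 L)) := aux_inj K L
  revert ha
  refine UniqueFactorizationMonoid.induction_on_prime a ?_ ?_ ?_
  · intro h; exact absurd rfl h
  · intro x hx _
    rw [Ideal.isUnit_iff.mp hx, Ideal.map_top]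
    unfold lambdaIdeal
    rw [← Ideal.one_eq_top, UniqueFactorizationMonoid.normalizedFactors_one]
    rw [← Ideal.one_eq_top, UniqueFactorizationMonoid.normalizedFactors_one]
    rfl
  · intro b q hb hq IH _
    have hqI : q.IsPrime := Ideal.isPrime_of_prime hq
    have hq0 : q ≠ ⊥ := by simpa using hq.ne_zero
    have hmq : Ideal.map (algebraMap (𝓞 K) (𝓞 L)) q ≠ 0 := by
      rw [Ne, Ideal.zero_eq_bot, Ideal.map_eq_bot_iff_of_injective hinj]; exact hq0
    have hmb : Ideal.map (algebraMap (𝓞 K) (𝓞 L)) b ≠ 0 := by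
      rw [Ne, Ideal.zero_eq_bot, Ideal.map_eq_bot_iff_of_injective hinj]
      simpa using hb
    have h1 : lambdaIdeal (Ideal.map (algebraMap (𝓞 K) (𝓞 L)) q) = -1 := by
      unfold lambdaIdeal
      exact Odd.neg_one_pow (aux_odd K L hodd q hq0 (hqI.isMaximal hq0))
    rw [Ideal.map_mul, lambdaIdeal_mul hmq hmb, lambdaIdeal_mul hq.ne_zero hb,
      h1, lambdaIdeal_prime hq, IH hb]
end

section
/- Let {a_n} be a sequence of complex numbers and M, R, C positive integers with: (1) a_n = 0 whenever rad(n) does not divide R; (2) s_d := Σ_n |a_{dn}| converges for every d; (3) s_d ≤ C/d for all M < d ≤ p_0·M, where p_0 is the largest prime factor of R. Then |Σ_n a_n − Σ_{n ≤ M} a_n| ≤ C'·(C/M)·(log(p_0·M))^{ω(R)}, where ω(R) is the number of distinct prime factors of R and C' is an absolute constant. -/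
lemma exists_div_aux (n M p0 : ℕ) (hM : 0 < M) (hn : M < n)
    (hp : ∀ q, q.Prime → q ∣ n → q ≤ p0) :
    ∃ d, d ∣ n ∧ M < d ∧ d ≤ p0 * M := by
  classical
  have hex : ∃ d, d ∣ n ∧ M < d := ⟨n, dvd_refl n, hn⟩
  set d := Nat.find hex with hd
  obtain ⟨hdn, hdM⟩ := Nat.find_spec hex
  have hd1 : d ≠ 1 := by omega
  have hd0 : 0 < d := by omega
  have hq : d.minFac.Prime := Nat.minFac_prime hd1
  have hqd : d.minFac ∣ d := Nat.minFac_dvd d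
  have hqn : d.minFac ∣ n := hqd.trans hdn
  have hqp0 : d.minFac ≤ p0 := hp _ hq hqn
  have hdiv : d / d.minFac ∣ n := (Nat.div_dvd_of_dvd hqd).trans hdn
  have hlt : d / d.minFac < d := Nat.div_lt_self hd0 hq.one_lt
  have hle : d / d.minFac ≤ M := by
    by_contra h
    exact Nat.find_min hex hlt ⟨hdiv, by omega⟩
  have heq : d.minFac * (d / d.minFac) = d := Nat.mul_div_cancel' hqd
  refine ⟨d, hdn, hdM, ?_⟩
  calc d = d.minFac * (d / d.minFac) := heq.symm
    _ ≤ p0 * M := Nat.mul_le_mul hqp0 hle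

lemma card_rad_le_aux (R N : ℕ) (hR : R ≠ 0) (D : Finset ℕ)
    (hD : ∀ d ∈ D, 0 < d ∧ d ≤ N ∧ (∏ p ∈ d.primeFactors, p) ∣ R) :
    D.card ≤ ∏ p ∈ R.primeFactors, (Nat.log p N + 1) := by
  classical
  have hsub : ∀ d ∈ D, d.primeFactors ⊆ R.primeFactors := by
    intro d hd p hp
    obtain ⟨hd0, hdN, hrad⟩ := hD d hd
    have hpp : p.Prime := Nat.prime_of_mem_primeFactors hp
    have hpR : p ∣ R := (Finset.dvd_prod_of_mem id hp).trans hrad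
    exact Nat.mem_primeFactors.2 ⟨hpp, hpR, hR⟩
  have key : ∀ d ∈ D, d = ∏ p ∈ R.primeFactors, p ^ d.factorization p := by
    intro d hd
    obtain ⟨hd0, _, _⟩ := hD d hd
    have h1 : d.factorization.prod (fun p k => p ^ k) = d :=
      Nat.factorization_prod_pow_eq_self hd0.ne'
    have h2 : ∏ p ∈ d.primeFactors, p ^ d.factorization p
        = ∏ p ∈ R.primeFactors, p ^ d.factorization p := by
      refine Finset.prod_subset (hsub d hd) (fun p _ hnp => ?_)
      have h0 : d.factorization p = 0 := by
        rw [← Finsupp.notMem_support_iff, Nat.support_factorization]; exact hnp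
      rw [h0, pow_zero]
    rw [← h2]
    conv_lhs => rw [← h1]
    rw [Finsupp.prod, Nat.support_factorization]
  have inj : D.card ≤ ((R.primeFactors.pi fun p => Finset.range (Nat.log p N + 1))).card := by
    apply Finset.card_le_card_of_injOn (fun d => fun p _ => d.factorization p)
    · intro d hd
      rw [Finset.mem_coe, Finset.mem_pi]
      intro p hp
      obtain ⟨hd0, hdN, _⟩ := hD d hd
      have hpp : p.Prime := Nat.prime_of_mem_primeFactors hp
      have hN0 : N ≠ 0 := by omega
      rw [Finset.mem_range, Nat.lt_succ_iff, Nat.le_log_iff_pow_le hpp.one_lt hN0]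
      exact le_trans (Nat.le_of_dvd hd0 (Nat.ordProj_dvd d p)) hdN
    · intro d1 h1 d2 h2 heq
      rw [key d1 h1, key d2 h2]
      refine Finset.prod_congr rfl (fun p hp => ?_)
      have := congrFun (congrFun heq p) hp
      simp only at this
      rw [this]
  calc D.card ≤ _ := inj
    _ = ∏ p ∈ R.primeFactors, (Nat.log p N + 1) := by
      rw [Finset.card_pi]
      exact Finset.prod_congr rfl (fun p _ => by rw [Finset.card_range])

/-- Let `{a_n}` be a sequence of complex numbers and `M`, `R`, `C` positive integers with:
(1) `a_n = 0` whenever `rad(n) ∤ R`; (2) `s_d := ∑_n |a_{dn}|` converges for every `d`;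
(3) `s_d ≤ C/d` for all `M < d ≤ p₀·M`, where `p₀` is the largest prime factor of `R`.
Then `|∑_n a_n − ∑_{n ≤ M} a_n| ≤ C'·(C/M)·(log(p₀·M))^{ω(R)}`, where `ω(R)` is the
number of distinct prime factors of `R` and `C'` is an absolute constant. -/
theorem stmt_19 :
    ∃ C' : ℝ, 0 < C' ∧
      ∀ (a : ℕ → ℂ) (M R C : ℕ), 0 < M → 0 < R → 0 < C →
        (∀ n : ℕ, 1 ≤ n → ¬ ((∏ p ∈ n.primeFactors, p) ∣ R) → a n = 0) →
        (∀ d : ℕ, 1 ≤ d → Summable (fun n : ℕ => ‖a (d * (n + 1))‖)) →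
        (∀ d : ℕ, M < d → d ≤ (R.primeFactors.sup id) * M →
          (∑' n : ℕ, ‖a (d * (n + 1))‖) ≤ (C : ℝ) / d) →
        ‖(∑' n : ℕ, a (n + 1)) - ∑ n ∈ Finset.Icc 1 M, a n‖ ≤
          C' * ((C : ℝ) / M) *
            (Real.log ((R.primeFactors.sup id) * M : ℕ)) ^ R.primeFactors.card := by
  classical
  refine ⟨729, by norm_num, ?_⟩
  intro a M R C hM hR hC hzero hsum hbound
  have hCM : (0:ℝ) ≤ (C:ℝ) / M := by positivity
  by_cases hR1 : R = 1
  · -- degenerate case: a n = 0 for n ≥ 2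
    subst hR1
    have hz : ∀ n, 2 ≤ n → a n = 0 := by
      intro n hn
      refine hzero n (by omega) (fun hdvd => ?_)
      have hp := Nat.minFac_prime (show n ≠ 1 by omega)
      have h2 : n.minFac ∣ ∏ p ∈ n.primeFactors, p :=
        Finset.dvd_prod_of_mem id
          (Nat.mem_primeFactors.2 ⟨hp, Nat.minFac_dvd n, by omega⟩)
      have h1 : n.minFac = 1 := Nat.eq_one_of_dvd_one (h2.trans hdvd)
      exact hp.one_lt.ne' h1
    have h1 : (∑' n : ℕ, a (n+1)) = a 1 := by
      rw [tsum_eq_single 0 (fun b hb => hz (b+1) (by omega))]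
    have h2 : ∑ n ∈ Finset.Icc 1 M, a n = a 1 := by
      rw [Finset.sum_eq_single_of_mem 1 (Finset.mem_Icc.2 ⟨le_refl 1, hM⟩)]
      intro b hb hb1
      have := Finset.mem_Icc.1 hb
      exact hz b (by omega)
    rw [h1, h2, sub_self, norm_zero]
    simp only [Nat.primeFactors_one, Finset.card_empty, pow_zero, mul_one]
    positivity
  · -- main case: R ≥ 2
    set S := R.primeFactors with hS
    set p0 := S.sup id with hp0def
    set N := p0 * M with hNdef
    obtain ⟨q0, hq0p, hq0d⟩ := Nat.exists_prime_and_dvd hR1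
    have hq0S : q0 ∈ S := Nat.mem_primeFactors.2 ⟨hq0p, hq0d, by omega⟩
    have hp02 : 2 ≤ p0 := le_trans hq0p.two_le (Finset.le_sup (f := id) hq0S)
    have hN2 : 2 ≤ N := le_trans hp02 (Nat.le_mul_of_pos_right _ hM)
    set D := (Finset.Ioc M N).filter (fun d => (∏ p ∈ d.primeFactors, p) ∣ R) with hDdef
    -- summability basics
    have hsum1 : Summable (fun n : ℕ => ‖a (n+1)‖) := by
      simpa using hsum 1 (le_refl 1)
    have hsuma : Summable (fun n : ℕ => a (n+1)) := by
      apply Summable.of_norm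
      simpa using hsum1
    -- the difference is the tail
    have htail : (∑' n : ℕ, a (n + 1)) - ∑ n ∈ Finset.Icc 1 M, a n
        = ∑' n : ℕ, a (n + M + 1) := by
      have h := Summable.sum_add_tsum_nat_add (f := fun n => a (n+1)) M hsuma
      have hIcc : ∑ n ∈ Finset.Icc 1 M, a n = ∑ i ∈ Finset.range M, a (i+1) := by
        rw [show Finset.Icc 1 M = Finset.Ico 1 (M+1) from (Finset.Ico_add_one_right_eq_Icc 1 M).symm,
          Finset.sum_Ico_eq_sum_range]
        simp [add_comm]
      rw [hIcc, sub_eq_iff_eq_add]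
      rw [← h]
      exact add_comm _ _
    have hsumtail : Summable (fun n : ℕ => ‖a (n + M + 1)‖) :=
      (summable_nat_add_iff M).2 hsum1
    have habs : ‖∑' n : ℕ, a (n + M + 1)‖
        ≤ ∑' n : ℕ, ‖a (n + M + 1)‖ := by
      exact norm_tsum_le_tsum_norm hsumtail
    -- every relevant n > M has a divisor in D
    have hDmem : ∀ n, M < n → a n ≠ 0 → ∃ d ∈ D, d ∣ n := by
      intro n hn hne
      have hrad : (∏ p ∈ n.primeFactors, p) ∣ R := by
        by_contra h; exact hne (hzero n (by omega) h)
      obtain ⟨d, hdn, hdM, hdN⟩ := exists_div_aux n M p0 hM hn (fun q hq hqn => by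
        have hqS : q ∈ S := Nat.mem_primeFactors.2 ⟨hq,
          (Finset.dvd_prod_of_mem id (Nat.mem_primeFactors.2 ⟨hq, hqn, by omega⟩)).trans hrad,
          by omega⟩
        exact Finset.le_sup (f := id) hqS)
      refine ⟨d, ?_, hdn⟩
      rw [hDdef, Finset.mem_filter, Finset.mem_Ioc]
      exact ⟨⟨hdM, hdN⟩,
        (Finset.prod_dvd_prod_of_subset _ _ id (Nat.primeFactors_mono hdn (by omega))).trans hrad⟩
    -- the key comparison
    have key : (∑' n : ℕ, ‖a (n + M + 1)‖)
        ≤ ∑ d ∈ D, ∑' m : ℕ, ‖a (d*(m+1))‖ := by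
      refine Summable.tsum_le_of_sum_range_le hsumtail (fun K => ?_)
      set T := (Finset.range K).filter (fun i => a (i + M + 1) ≠ 0) with hT
      have hTsum : ∑ i ∈ Finset.range K, ‖a (i + M + 1)‖
          = ∑ i ∈ T, ‖a (i + M + 1)‖ := by
        refine (Finset.sum_subset (Finset.filter_subset _ _) ?_).symm
        intro i hi hni
        rw [Finset.mem_filter] at hni
        have h0 : a (i + M + 1) = 0 := by
          by_contra h; exact hni ⟨hi, h⟩
        rw [h0, norm_zero]
      have hgex : ∀ i : ℕ, ∃ d : ℕ, i ∈ T → d ∈ D ∧ d ∣ (i + M + 1) := by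
        intro i
        by_cases h : i ∈ T
        · have hi := h
          rw [hT, Finset.mem_filter] at hi
          obtain ⟨d, hd1, hd2⟩ := hDmem (i + M + 1) (by omega) hi.2
          exact ⟨d, fun _ => ⟨hd1, hd2⟩⟩
        · exact ⟨1, fun h' => absurd h' h⟩
      choose g hgD using hgex
      rw [hTsum, ← Finset.sum_fiberwise_of_maps_to (fun i hi => (hgD i hi).1)
        (fun i => ‖a (i + M + 1)‖)]
      refine Finset.sum_le_sum (fun d hd => ?_)
      have hdD := hd
      rw [hDdef, Finset.mem_filter, Finset.mem_Ioc] at hdD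
      have hd0 : 0 < d := by omega
      have hdvd : ∀ i ∈ T.filter (fun i => g i = d), d ∣ (i + M + 1) := by
        intro i hi
        rw [Finset.mem_filter] at hi
        have := (hgD i hi.1).2
        rwa [hi.2] at this
      have hrepr : ∀ i ∈ T.filter (fun i => g i = d),
          d * ((i + M + 1) / d - 1 + 1) = i + M + 1 := by
        intro i hi
        have h1 := hdvd i hi
        have h2 : 0 < (i + M + 1) / d := Nat.div_pos (Nat.le_of_dvd (by omega) h1) hd0
        have h3 : (i + M + 1) / d - 1 + 1 = (i + M + 1) / d := by omega
        rw [h3, Nat.mul_div_cancel' h1]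
      calc ∑ i ∈ T.filter (fun i => g i = d), ‖a (i + M + 1)‖
          = ∑ k ∈ (T.filter (fun i => g i = d)).image (fun i => (i + M + 1) / d - 1),
              ‖a (d * (k + 1))‖ := by
            rw [Finset.sum_image (fun i hi j hj hij => by
              have h1 := hrepr i hi
              have h2 := hrepr j hj
              rw [hij] at h1
              have h3 := h1.symm.trans h2
              omega)]
            exact Finset.sum_congr rfl (fun i hi => by rw [hrepr i hi])
        _ ≤ ∑' m : ℕ, ‖a (d * (m + 1))‖ :=
            Summable.sum_le_tsum _ (fun _ _ => norm_nonneg _) (hsum d hd0)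
    -- bound the sum over D
    have hB : ∑ d ∈ D, (∑' m : ℕ, ‖a (d*(m+1))‖) ≤ (D.card : ℝ) * ((C:ℝ)/M) := by
      calc ∑ d ∈ D, (∑' m : ℕ, ‖a (d*(m+1))‖) ≤ ∑ d ∈ D, (C:ℝ)/M := by
            refine Finset.sum_le_sum (fun d hd => ?_)
            rw [hDdef, Finset.mem_filter, Finset.mem_Ioc] at hd
            refine le_trans (hbound d hd.1.1 hd.1.2) ?_
            apply div_le_div_of_nonneg_left (by positivity) (by exact_mod_cast hM)
            exact_mod_cast le_of_lt hd.1.1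
        _ = (D.card : ℝ) * ((C:ℝ)/M) := by
            rw [Finset.sum_const, nsmul_eq_mul]
    -- counting
    have hcard : D.card ≤ ∏ p ∈ S, (Nat.log p N + 1) := by
      refine card_rad_le_aux R N (by omega) D (fun d hd => ?_)
      rw [hDdef, Finset.mem_filter, Finset.mem_Ioc] at hd
      exact ⟨by omega, hd.1.2, hd.2⟩
    -- the logarithmic bound
    have hlogN : Real.log 2 ≤ Real.log N := by
      apply Real.log_le_log (by norm_num)
      exact_mod_cast hN2
    have hlog2 : (0.6931471803:ℝ) < Real.log 2 := Real.log_two_gt_d9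
    have hlogN0 : (0:ℝ) < Real.log N := by linarith
    have hfinal : ((∏ p ∈ S, (Nat.log p N + 1) : ℕ) : ℝ) ≤ 729 * (Real.log N) ^ S.card := by
      have hstep : ∀ p ∈ S, ((Nat.log p N : ℝ) + 1) ≤ (2 / Real.log p) * Real.log N := by
        intro p hp
        have hpp : p.Prime := Nat.prime_of_mem_primeFactors hp
        have hpN : p ≤ N := le_trans (Finset.le_sup (f := id) hp) (Nat.le_mul_of_pos_right _ hM)
        have hK1 : 0 < Nat.log p N := Nat.log_pos hpp.one_lt hpN
        have hlogp : 0 < Real.log p := Real.log_pos (by exact_mod_cast hpp.one_lt)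
        have hpow : ((p:ℝ)) ^ (Nat.log p N) ≤ (N:ℝ) := by
          exact_mod_cast Nat.pow_log_le_self p (show N ≠ 0 by omega)
        have hKle : (Nat.log p N : ℝ) * Real.log p ≤ Real.log N := by
          rw [← Real.log_pow]
          exact Real.log_le_log (pow_pos (by exact_mod_cast hpp.pos) _) hpow
        have h2 : ((Nat.log p N : ℝ)) + 1 ≤ 2 * (Nat.log p N : ℝ) := by
          have : (1:ℝ) ≤ (Nat.log p N : ℝ) := by exact_mod_cast hK1
          linarith
        calc ((Nat.log p N : ℝ) + 1) ≤ 2 * (Nat.log p N : ℝ) := h2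
          _ ≤ 2 * (Real.log N / Real.log p) := by
              refine mul_le_mul_of_nonneg_left ?_ (by norm_num)
              rw [le_div_iff₀ hlogp]; exact hKle
          _ = (2 / Real.log p) * Real.log N := by ring
      have h729 : ∏ p ∈ S, (2 / Real.log p) ≤ 729 := by
        calc ∏ p ∈ S, (2 / Real.log p)
            ≤ ∏ p ∈ S, (if p ≤ 7 then (3:ℝ) else 1) := by
              refine Finset.prod_le_prod (fun p hp => ?_) (fun p hp => ?_)
              · have hpp : p.Prime := Nat.prime_of_mem_primeFactors hp
                have : (0:ℝ) < Real.log p := Real.log_pos (by exact_mod_cast hpp.one_lt)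
                positivity
              · have hpp : p.Prime := Nat.prime_of_mem_primeFactors hp
                have hp2 : (2:ℝ) ≤ (p:ℝ) := by exact_mod_cast hpp.two_le
                have hlp : Real.log 2 ≤ Real.log p := Real.log_le_log (by norm_num) hp2
                by_cases h7 : p ≤ 7
                · simp only [h7, if_true]
                  rw [div_le_iff₀ (by linarith)]
                  linarith
                · simp only [h7, if_false]
                  have h8 : (8:ℝ) ≤ (p:ℝ) := by exact_mod_cast (show 8 ≤ p by omega)
                  have hl8 : Real.log 8 ≤ Real.log p := Real.log_le_log (by norm_num) h8
                  have hl8e : Real.log 8 = 3 * Real.log 2 := by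
                    rw [show (8:ℝ) = 2^3 by norm_num, Real.log_pow]
                    push_cast; ring
                  rw [div_le_one (by nlinarith)]
                  nlinarith
          _ = 3 ^ (S.filter (fun p => p ≤ 7)).card := by
              rw [Finset.prod_ite, Finset.prod_const, Finset.prod_const, one_pow, mul_one]
          _ ≤ 3 ^ 6 := by
              refine pow_le_pow_right₀ (by norm_num) ?_
              have hsub : (S.filter (fun p => p ≤ 7)) ⊆ Finset.Icc 2 7 := by
                intro p hp
                rw [Finset.mem_filter] at hp
                rw [Finset.mem_Icc]
                exact ⟨(Nat.prime_of_mem_primeFactors hp.1).two_le, hp.2⟩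
              calc (S.filter (fun p => p ≤ 7)).card ≤ (Finset.Icc 2 7).card :=
                    Finset.card_le_card hsub
                _ = 6 := rfl
          _ ≤ 729 := by norm_num
      calc ((∏ p ∈ S, (Nat.log p N + 1) : ℕ) : ℝ)
          = ∏ p ∈ S, ((Nat.log p N : ℝ) + 1) := by push_cast; rfl
        _ ≤ ∏ p ∈ S, ((2 / Real.log p) * Real.log N) :=
            Finset.prod_le_prod (fun p _ => by positivity) hstep
        _ = (∏ p ∈ S, (2 / Real.log p)) * (Real.log N) ^ S.card := by
            rw [Finset.prod_mul_distrib, Finset.prod_const]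
        _ ≤ 729 * (Real.log N) ^ S.card :=
            mul_le_mul_of_nonneg_right h729 (by positivity)
    -- put everything together
    rw [htail]
    calc ‖∑' n : ℕ, a (n + M + 1)‖
        ≤ ∑' n : ℕ, ‖a (n + M + 1)‖ := habs
      _ ≤ ∑ d ∈ D, ∑' m : ℕ, ‖a (d*(m+1))‖ := key
      _ ≤ (D.card : ℝ) * ((C:ℝ)/M) := hB
      _ ≤ ((∏ p ∈ S, (Nat.log p N + 1) : ℕ) : ℝ) * ((C:ℝ)/M) := by
          apply mul_le_mul_of_nonneg_right _ hCM
          exact_mod_cast hcard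
      _ ≤ (729 * (Real.log N) ^ S.card) * ((C:ℝ)/M) := mul_le_mul_of_nonneg_right hfinal hCM
      _ = 729 * ((C:ℝ)/M) * (Real.log N) ^ S.card := by ring
end
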